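/- arXiv:1503.03648 — 4 statements merged into one kernel-verified Lean document; each statement's English description precedes it below -/
import Mathlib

section
/- Let U ⊆ ℂ be an open connected set and let u : U → ℂ be twice continuously differentiable with Δu = 0 on U. Then H_u(z) = ∂_z u(z) · ∂_z ū(z) vanishes identically on U if and only if u is conformal, i.e. either u is holomorphic on U or the pointwise conjugate z ↦ ū(z) is holomorphic on U. -/
open Complex MeasureTheory

noncomputable section

/-- Partial derivative in the `x`-direction (as a function of `z = x + iy`). -/
def pdx (u : ℂ → ℂ) (z : ℂ) : ℂ := fderiv ℝ u z 1

/-- Partial derivative in the `y`-direction. -/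
def pdy (u : ℂ → ℂ) (z : ℂ) : ℂ := fderiv ℝ u z Complex.I

/-- Wirtinger derivative `∂_z u = (1/2)(∂ₓu − i ∂_y u)`. -/
def wirt (u : ℂ → ℂ) (z : ℂ) : ℂ := (1 / 2) * (pdx u z - Complex.I * pdy u z)

/-- Hopf differential coefficient `H_u(z) = ∂_z u · ∂_z ū`. -/
def hopf (u : ℂ → ℂ) (z : ℂ) : ℂ :=
  wirt u z * wirt (fun w => (starRingEnd ℂ) (u w)) z

/-- Open annulus `A_ρ = {ρ < |z| < 1}`. -/
def ann (ρ : ℝ) : Set ℂ := {z : ℂ | ρ < ‖z‖ ∧ ‖z‖ < 1}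

/-- Closed annulus `Ā_ρ = {ρ ≤ |z| ≤ 1}`. -/
def cann (ρ : ℝ) : Set ℂ := {z : ℂ | ρ ≤ ‖z‖ ∧ ‖z‖ ≤ 1}

/-- Boundary `∂A_ρ`, the union of the circles `|z| = 1` and `|z| = ρ`. -/
def bdry (ρ : ℝ) : Set ℂ := {z : ℂ | ‖z‖ = 1 ∨ ‖z‖ = ρ}

/-- Wedge product `a ∧ b = Re a · Im b − Im a · Re b`. -/
def wedge (a b : ℂ) : ℝ := a.re * b.im - a.im * b.re

/-- Radial derivative `∂_r u(z)`, the directional derivative in direction `z/|z|`. -/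
def rderiv (u : ℂ → ℂ) (z : ℂ) : ℂ := fderiv ℝ u z (z / (‖z‖ : ℂ))

/-- Degree of `u` on the circle `|z| = r`:
`deg(u, C_r) = (1/2π) ∫₀^{2π} u(re^{iθ}) ∧ ∂_θ[u(re^{iθ})] dθ`. -/
def degCirc (u : ℂ → ℂ) (r : ℝ) : ℝ :=
  (1 / (2 * Real.pi)) * ∫ θ in (0:ℝ)..(2 * Real.pi),
    wedge (u ((r : ℂ) * Complex.exp (Complex.I * θ)))
      (deriv (fun t : ℝ => u ((r : ℂ) * Complex.exp (Complex.I * t))) θ)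

/-- Dirichlet energy `E(u) = (1/2) ∫_{A_ρ} (|∂ₓu|² + |∂_y u|²)`. -/
def energy (ρ : ℝ) (u : ℂ → ℂ) : ℝ :=
  (1 / 2) * ∫ z in ann ρ, (‖pdx u z‖ ^ 2 + ‖pdy u z‖ ^ 2)

end

-- conj of fderiv
lemma conj_fderiv {u : ℂ → ℂ} {z : ℂ} (hu : DifferentiableAt ℝ u z) (v : ℂ) :
    fderiv ℝ (fun w => (starRingEnd ℂ) (u w)) z v = (starRingEnd ℂ) (fderiv ℝ u z v) := by
  have h := (hu.hasFDerivAt.star).fderiv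
  simp only [starRingEnd_apply]
  rw [h]
  simp [starL']

-- CR implies complex differentiable
lemma hol_of_cr {f : ℂ → ℂ} {z : ℂ} (hd : DifferentiableAt ℝ f z)
    (hcr : fderiv ℝ f z Complex.I = Complex.I * fderiv ℝ f z 1) :
    DifferentiableAt ℂ f z := by
  rw [differentiableAt_iff_restrictScalars ℝ hd]
  refine ⟨(fderiv ℝ f z 1) • (ContinuousLinearMap.id ℂ ℂ), ?_⟩
  ext1 w
  have hre := Complex.re_add_im w
  have h1 : ((fderiv ℝ f z 1 • ContinuousLinearMap.id ℂ ℂ).restrictScalars ℝ) w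
      = fderiv ℝ f z 1 * w := by simp
  have hw : w = w.re • (1:ℂ) + w.im • Complex.I := by
    simp only [Complex.real_smul, mul_one]; exact hre.symm
  have key : fderiv ℝ f z w = w.re • fderiv ℝ f z 1 + w.im • fderiv ℝ f z Complex.I := by
    conv_lhs => rw [hw]
    rw [map_add, _root_.map_smul, _root_.map_smul]
  rw [h1, key, hcr]
  simp only [Complex.real_smul]
  linear_combination -(fderiv ℝ f z 1) * hre

lemma cr_of_hol {f : ℂ → ℂ} {z : ℂ} (hd : DifferentiableAt ℂ f z) :
    fderiv ℝ f z Complex.I = Complex.I * fderiv ℝ f z 1 := by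
  have h := (hd.hasFDerivAt.restrictScalars ℝ).fderiv
  rw [h]
  show fderiv ℂ f z Complex.I = Complex.I * fderiv ℂ f z 1
  have h2 : fderiv ℂ f z Complex.I = fderiv ℂ f z (Complex.I • 1) := by norm_num
  rw [h2, _root_.map_smul, smul_eq_mul]

-- Evaluation of fderiv of a CLM-valued map
lemma fderiv_eval {F : ℂ → ℂ →L[ℝ] ℂ} {z : ℂ} (hF : DifferentiableAt ℝ F z) (v w : ℂ) :
    fderiv ℝ (fun y => F y w) z v = fderiv ℝ F z v w := by
  have h : HasFDerivAt (fun y => F y w)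
      ((ContinuousLinearMap.apply ℝ ℂ w).comp (fderiv ℝ F z)) z :=
    (ContinuousLinearMap.apply ℝ ℂ w).hasFDerivAt.comp z hF.hasFDerivAt
  rw [h.fderiv]; rfl

lemma diff_eval {F : ℂ → ℂ →L[ℝ] ℂ} {z : ℂ} (hF : DifferentiableAt ℝ F z) (w : ℂ) :
    DifferentiableAt ℝ (fun y => F y w) z :=
  (ContinuousLinearMap.apply ℝ ℂ w).differentiable.differentiableAt.comp z hF

lemma wirt_eq (u : ℂ → ℂ) :
    wirt u = fun y => (1/2 : ℂ) * (fderiv ℝ u y 1 - Complex.I * fderiv ℝ u y Complex.I) := rfl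

lemma wirt_diffR {u : ℂ → ℂ} {z : ℂ} (hF : DifferentiableAt ℝ (fderiv ℝ u) z) :
    DifferentiableAt ℝ (wirt u) z := by
  rw [wirt_eq]
  exact (((diff_eval hF 1).sub ((diff_eval hF Complex.I).const_mul Complex.I)).const_mul _)

lemma wirt_fderiv {u : ℂ → ℂ} {z : ℂ} (hF : DifferentiableAt ℝ (fderiv ℝ u) z) (v : ℂ) :
    fderiv ℝ (wirt u) z v = (1/2 : ℂ) * (fderiv ℝ (fderiv ℝ u) z v 1
      - Complex.I * fderiv ℝ (fderiv ℝ u) z v Complex.I) := by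
  have dA := diff_eval hF (1:ℂ)
  have dB := diff_eval hF Complex.I
  have dS : DifferentiableAt ℝ (fun y => fderiv ℝ u y 1 - Complex.I * fderiv ℝ u y Complex.I) z :=
    dA.sub (dB.const_mul Complex.I)
  rw [wirt_eq, fderiv_const_mul dS ((1:ℂ)/2)]
  simp only [ContinuousLinearMap.smul_apply, smul_eq_mul]
  rw [fderiv_fun_sub dA (dB.const_mul Complex.I)]
  simp only [ContinuousLinearMap.sub_apply]
  rw [fderiv_const_mul dB Complex.I]
  simp only [ContinuousLinearMap.smul_apply, smul_eq_mul]
  rw [fderiv_eval hF, fderiv_eval hF]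

lemma hplus_fderiv {u : ℂ → ℂ} {z : ℂ} (hF : DifferentiableAt ℝ (fderiv ℝ u) z) (v : ℂ) :
    fderiv ℝ (fun y => (1/2 : ℂ) * (fderiv ℝ u y 1 + Complex.I * fderiv ℝ u y Complex.I)) z v
      = (1/2 : ℂ) * (fderiv ℝ (fderiv ℝ u) z v 1
        + Complex.I * fderiv ℝ (fderiv ℝ u) z v Complex.I) := by
  have dA := diff_eval hF (1:ℂ)
  have dB := diff_eval hF Complex.I
  have dS : DifferentiableAt ℝ (fun y => fderiv ℝ u y 1 + Complex.I * fderiv ℝ u y Complex.I) z :=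
    dA.add (dB.const_mul Complex.I)
  rw [fderiv_const_mul dS ((1:ℂ)/2)]
  simp only [ContinuousLinearMap.smul_apply, smul_eq_mul]
  rw [fderiv_fun_add dA (dB.const_mul Complex.I)]
  simp only [ContinuousLinearMap.add_apply]
  rw [fderiv_const_mul dB Complex.I]
  simp only [ContinuousLinearMap.smul_apply, smul_eq_mul]
  rw [fderiv_eval hF, fderiv_eval hF]

lemma hplus_diffR {u : ℂ → ℂ} {z : ℂ} (hF : DifferentiableAt ℝ (fderiv ℝ u) z) :
    DifferentiableAt ℝ
      (fun y => (1/2 : ℂ) * (fderiv ℝ u y 1 + Complex.I * fderiv ℝ u y Complex.I)) z :=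
  ((diff_eval hF 1).add ((diff_eval hF Complex.I).const_mul Complex.I)).const_mul _

lemma wirt_conj_eq {u : ℂ → ℂ} {z : ℂ} (hud : DifferentiableAt ℝ u z) :
    wirt (fun w => (starRingEnd ℂ) (u w)) z
      = (starRingEnd ℂ)
          ((1/2 : ℂ) * (fderiv ℝ u z 1 + Complex.I * fderiv ℝ u z Complex.I)) := by
  simp only [wirt, pdx, pdy, conj_fderiv hud, map_mul, map_add, map_one, map_div₀, map_ofNat,
    Complex.conj_I]
  ring

/-- For a harmonic `u` on an open connected set `U`, `H_u ≡ 0` on `U` iff `u` is conformal,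
i.e. `u` or its pointwise conjugate is holomorphic on `U`. -/
theorem stmt1 (U : Set ℂ) (hU : IsOpen U) (hUconn : IsConnected U) (u : ℂ → ℂ)
    (hreg : ContDiffOn ℝ 2 u U)
    (hharm : ∀ z ∈ U, pdx (pdx u) z + pdy (pdy u) z = 0) :
    (∀ z ∈ U, hopf u z = 0) ↔
      (DifferentiableOn ℂ u U ∨
        DifferentiableOn ℂ (fun z => (starRingEnd ℂ) (u z)) U) := by
  have hud : ∀ z ∈ U, DifferentiableAt ℝ u z := fun z hz =>
    (hreg.contDiffAt (hU.mem_nhds hz)).differentiableAt two_ne_zero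
  have hFd : ∀ z ∈ U, DifferentiableAt ℝ (fderiv ℝ u) z := fun z hz =>
    (((hreg.contDiffAt (hU.mem_nhds hz)).fderiv_right (m := 1) (le_refl 2)).differentiableAt one_ne_zero)
  have hsymm : ∀ z ∈ U, ∀ v w : ℂ,
      fderiv ℝ (fderiv ℝ u) z v w = fderiv ℝ (fderiv ℝ u) z w v := fun z hz =>
    ((hreg.contDiffAt (hU.mem_nhds hz)).isSymmSndFDerivAt (by simp [minSmoothness_of_isRCLikeNormedField]))
  have harm2 : ∀ z ∈ U, fderiv ℝ (fderiv ℝ u) z 1 1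
      + fderiv ℝ (fderiv ℝ u) z Complex.I Complex.I = 0 := by
    intro z hz
    have h := hharm z hz
    have e1 : pdx (pdx u) z = fderiv ℝ (fderiv ℝ u) z 1 1 := fderiv_eval (hFd z hz) 1 1
    have e2 : pdy (pdy u) z = fderiv ℝ (fderiv ℝ u) z Complex.I Complex.I :=
      fderiv_eval (hFd z hz) Complex.I Complex.I
    rw [e1, e2] at h
    exact h
  have hfhol : ∀ z ∈ U, DifferentiableAt ℂ (wirt u) z := by
    intro z hz
    refine hol_of_cr (wirt_diffR (hFd z hz)) ?_
    rw [wirt_fderiv (hFd z hz), wirt_fderiv (hFd z hz)]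
    have hs := hsymm z hz 1 Complex.I
    have hh := harm2 z hz
    linear_combination (-1/2 : ℂ) * hs + (-Complex.I/2) * hh + (fderiv ℝ (fderiv ℝ u) z 1 Complex.I / 2) * Complex.I_sq
  have hghol : ∀ z ∈ U, DifferentiableAt ℂ (wirt (fun w => (starRingEnd ℂ) (u w))) z := by
    intro z hz
    have heq : (wirt (fun w => (starRingEnd ℂ) (u w))) =ᶠ[nhds z]
        (fun y => (starRingEnd ℂ)
          ((1/2 : ℂ) * (fderiv ℝ u y 1 + Complex.I * fderiv ℝ u y Complex.I))) := by
      filter_upwards [hU.mem_nhds hz] with w hw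
      exact wirt_conj_eq (hud w hw)
    have hpd := hplus_diffR (hFd z hz)
    have hpd' : DifferentiableAt ℝ (fun y => (starRingEnd ℂ)
        ((1/2 : ℂ) * (fderiv ℝ u y 1 + Complex.I * fderiv ℝ u y Complex.I))) z := hpd.star
    have hgd : DifferentiableAt ℝ (wirt (fun w => (starRingEnd ℂ) (u w))) z := by
      rw [heq.differentiableAt_iff]
      exact hpd'
    refine hol_of_cr hgd ?_
    rw [heq.fderiv_eq, conj_fderiv hpd, conj_fderiv hpd,
      hplus_fderiv (hFd z hz), hplus_fderiv (hFd z hz)]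
    have hs := hsymm z hz 1 Complex.I
    have hh := harm2 z hz
    have hkey : Complex.I * (starRingEnd ℂ) ((1/2 : ℂ) * (fderiv ℝ (fderiv ℝ u) z 1 1
          + Complex.I * fderiv ℝ (fderiv ℝ u) z 1 Complex.I))
        = (starRingEnd ℂ) (-Complex.I * ((1/2 : ℂ) * (fderiv ℝ (fderiv ℝ u) z 1 1
          + Complex.I * fderiv ℝ (fderiv ℝ u) z 1 Complex.I))) := by
      rw [map_mul]
      simp [Complex.conj_I]
    rw [hkey]
    congr 1
    linear_combination (-1/2 : ℂ) * hs + (Complex.I/2) * hh + (fderiv ℝ (fderiv ℝ u) z 1 Complex.I / 2) * Complex.I_sq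
  constructor
  · intro h0
    by_cases hall : ∀ z ∈ U, wirt u z = 0
    · right
      intro z hz
      have h' : (1/2 : ℂ) * (fderiv ℝ u z 1 - Complex.I * fderiv ℝ u z Complex.I) = 0 :=
        hall z hz
      have ha : fderiv ℝ u z 1 = Complex.I * fderiv ℝ u z Complex.I := by
        linear_combination 2 * h'
      have hst : DifferentiableAt ℝ (fun w => (starRingEnd ℂ) (u w)) z := (hud z hz).star
      refine (hol_of_cr hst ?_).differentiableWithinAt
      rw [conj_fderiv (hud z hz), conj_fderiv (hud z hz), ha, map_mul, Complex.conj_I]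
      linear_combination ((starRingEnd ℂ) (fderiv ℝ u z Complex.I)) * Complex.I_sq
    · push_neg at hall
      obtain ⟨z₀, hz₀, hfz₀⟩ := hall
      left
      have hgan : AnalyticOnNhd ℂ (wirt (fun w => (starRingEnd ℂ) (u w))) U :=
        DifferentiableOn.analyticOnNhd
          (fun z hz => (hghol z hz).differentiableWithinAt) hU
      have hgz : Set.EqOn (wirt (fun w => (starRingEnd ℂ) (u w))) 0 U := by
        refine hgan.eqOn_zero_of_preconnected_of_eventuallyEq_zero
          hUconn.isPreconnected hz₀ ?_
        have hfc : ContinuousAt (wirt u) z₀ := (hfhol z₀ hz₀).continuousAt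
        have h1 : ∀ᶠ w in nhds z₀, wirt u w ≠ 0 := hfc.eventually_ne hfz₀
        filter_upwards [h1, hU.mem_nhds hz₀] with w hw1 hw2
        have hh := h0 w hw2
        simp only [hopf] at hh
        exact (mul_eq_zero.mp hh).resolve_left hw1
      intro z hz
      have hg0 : wirt (fun w => (starRingEnd ℂ) (u w)) z = 0 := hgz hz
      rw [wirt_conj_eq (hud z hz)] at hg0
      have h3 : (1/2 : ℂ) * (fderiv ℝ u z 1 + Complex.I * fderiv ℝ u z Complex.I) = 0 := by
        have h4 := congrArg (starRingEnd ℂ) hg0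
        simpa using h4
      refine (hol_of_cr (hud z hz) ?_).differentiableWithinAt
      linear_combination (-2 * Complex.I) * h3 + (fderiv ℝ u z Complex.I) * Complex.I_sq
  · rintro (hdiff | hdiff) z hz
    · have hz' : DifferentiableAt ℂ u z := hdiff.differentiableAt (hU.mem_nhds hz)
      have hcr := cr_of_hol hz'
      have hz0 : (1/2 : ℂ) * (fderiv ℝ u z 1 + Complex.I * fderiv ℝ u z Complex.I) = 0 := by
        rw [hcr]
        linear_combination (fderiv ℝ u z 1 / 2) * Complex.I_sq
      have hw0 : wirt (fun w => (starRingEnd ℂ) (u w)) z = 0 := by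
        rw [wirt_conj_eq (hud z hz), hz0, map_zero]
      simp only [hopf, hw0, mul_zero]
    · have hz' := hdiff.differentiableAt (hU.mem_nhds hz)
      have hcr := cr_of_hol hz'
      rw [conj_fderiv (hud z hz), conj_fderiv (hud z hz)] at hcr
      have hb : fderiv ℝ u z Complex.I = -Complex.I * fderiv ℝ u z 1 := by
        have h2 := congrArg (starRingEnd ℂ) hcr
        simpa [map_mul, Complex.conj_I] using h2
      have hw0 : wirt u z = 0 := by
        have : wirt u z
            = (1/2 : ℂ) * (fderiv ℝ u z 1 - Complex.I * fderiv ℝ u z Complex.I) := rfl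
        rw [this, hb]
        linear_combination (fderiv ℝ u z 1 / 2) * Complex.I_sq
      simp only [hopf, hw0, zero_mul]
end

section
/- Let 0 < ρ < 1 and let u : Ā_ρ → ℂ be continuously differentiable on the closed annulus with |u(z)| = 1 for all z ∈ ∂A_ρ. Set p = deg(u, C₁) and q = deg(u, C_ρ). Then ∫_{A_ρ} ∂ₓu ∧ ∂_y u dx dy = π(p − q). -/
open Complex MeasureTheory

section StokesAux
open Set Filter Topology

noncomputable section


lemma continuous_wedge : Continuous fun p : ℂ × ℂ => wedge p.1 p.2 := by
  unfold wedge; fun_prop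

lemma abs_wedge_le (a b : ℂ) : |wedge a b| ≤ 2 * ‖a‖ * ‖b‖ := by
  have h1 : |a.re| ≤ ‖a‖ := Complex.abs_re_le_norm a
  have h2 : |a.im| ≤ ‖a‖ := Complex.abs_im_le_norm a
  have h3 : |b.re| ≤ ‖b‖ := Complex.abs_re_le_norm b
  have h4 : |b.im| ≤ ‖b‖ := Complex.abs_im_le_norm b
  have := norm_nonneg a
  have := norm_nonneg b
  have h5 : (0:ℝ) ≤ |a.re| := abs_nonneg _
  have h6 : (0:ℝ) ≤ |a.im| := abs_nonneg _
  calc |wedge a b| ≤ |a.re * b.im| + |a.im * b.re| := abs_sub _ _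
    _ = |a.re| * |b.im| + |a.im| * |b.re| := by rw [abs_mul, abs_mul]
    _ ≤ ‖a‖ * ‖b‖ + ‖a‖ * ‖b‖ := by gcongr
    _ = 2 * ‖a‖ * ‖b‖ := by ring

lemma wedge_smul_left (c : ℝ) (a b : ℂ) : wedge (c • a) b = c * wedge a b := by
  simp [wedge, Complex.real_smul, Complex.mul_re, Complex.mul_im]; ring

lemma isCompact_cann (ρ : ℝ) : IsCompact (cann ρ) := by
  have hc : IsClosed (cann ρ) := by
    have : cann ρ = (fun z : ℂ => ‖z‖) ⁻¹' (Icc ρ 1) := rfl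
    rw [this]
    exact (isClosed_Icc).preimage continuous_norm
  apply Metric.isCompact_of_isClosed_isBounded hc
  apply Metric.isBounded_closedBall (x := (0:ℂ)) (r := 1) |>.subset
  intro z hz
  simpa [Complex.dist_eq] using hz.2

lemma isOpen_ann (ρ : ℝ) : IsOpen (ann ρ) := by
  have : ann ρ = (fun z : ℂ => ‖z‖) ⁻¹' (Ioo ρ 1) := rfl
  rw [this]; exact isOpen_Ioo.preimage continuous_norm

lemma ann_subset_cann (ρ : ℝ) : ann ρ ⊆ cann ρ := fun z hz => ⟨hz.1.le, hz.2.le⟩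

lemma uniqueDiffOn_cann (ρ : ℝ) (hρ0 : 0 < ρ) (hρ1 : ρ < 1) : UniqueDiffOn ℝ (cann ρ) := by
  intro z hz
  obtain ⟨hz1, hz2⟩ := hz
  have habs : 0 < ‖z‖ := lt_of_lt_of_le hρ0 hz1
  have hδ : (0:ℝ) < (1-ρ)/2 := by linarith
  set c : ℂ := (((1+ρ)/2 / ‖z‖ : ℝ) : ℂ) * z with hc
  have hcabs : ‖c‖ = (1+ρ)/2 := by
    rw [hc, norm_mul, Complex.norm_real, Real.norm_eq_abs, abs_of_pos (by positivity)]
    field_simp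
  have hsub : Metric.closedBall c ((1-ρ)/2) ⊆ cann ρ := by
    intro w hw
    rw [Metric.mem_closedBall, Complex.dist_eq] at hw
    have key : |‖w‖ - ‖c‖| ≤ (1-ρ)/2 := by
      have h := abs_norm_sub_norm_le w c
      exact h.trans hw
    rw [hcabs, abs_le] at key
    exact ⟨by linarith [key.1], by linarith [key.2]⟩
  have hzmem : z ∈ Metric.closedBall c ((1-ρ)/2) := by
    rw [Metric.mem_closedBall, Complex.dist_eq]
    have h1 : z - c = (((1 - (1+ρ)/2 / ‖z‖ : ℝ)) : ℂ) * z := by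
      rw [hc]; push_cast; ring
    rw [h1, norm_mul, Complex.norm_real, Real.norm_eq_abs]
    calc |1 - (1+ρ)/2 / ‖z‖| * ‖z‖
        = |(1 - (1+ρ)/2 / ‖z‖) * ‖z‖| := by
          rw [abs_mul, abs_of_pos habs]
      _ = |‖z‖ - (1+ρ)/2| := by congr 1; field_simp
      _ ≤ (1-ρ)/2 := by rw [abs_le]; constructor <;> linarith
  have hudo := uniqueDiffOn_convex (convex_closedBall c ((1-ρ)/2))
    (by rw [interior_closedBall c (ne_of_gt hδ)]
        exact ⟨c, Metric.mem_ball_self hδ⟩)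
  exact (hudo z hzmem).mono hsub

/-- the path `z r θ = r e^{iθ}` -/
def pz (r θ : ℝ) : ℂ := (r:ℂ) * Complex.exp (Complex.I * (θ:ℂ))

lemma abs_pz (r θ : ℝ) : ‖pz r θ‖ = |r| := by
  simp [pz, Complex.norm_exp]

lemma pz_mem {ρ r : ℝ} (hρ0 : 0 < ρ) (hr : r ∈ Icc ρ 1) (θ : ℝ) : pz r θ ∈ cann ρ := by
  have : ‖pz r θ‖ = r := by rw [abs_pz, abs_of_pos (lt_of_lt_of_le hρ0 hr.1)]
  constructor
  · rw [this]; exact hr.1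
  · rw [this]; exact hr.2

lemma hasDerivAt_pz_theta (r θ : ℝ) :
    HasDerivAt (fun t : ℝ => pz r t) (Complex.I * pz r θ) θ := by
  have h1 : HasDerivAt (fun t : ℝ => Complex.I * (t:ℂ)) Complex.I θ := by
    simpa using (Complex.ofRealCLM.hasDerivAt (x := θ)).const_mul Complex.I
  have h2 := h1.cexp
  have h3 := h2.const_mul (r:ℂ)
  refine h3.congr_deriv ?_
  simp [pz]; ring

lemma hasDerivAt_pz_radial (r θ : ℝ) :
    HasDerivAt (fun s : ℝ => pz s θ) (Complex.exp (Complex.I * θ)) r := by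
  simpa [pz] using (Complex.ofRealCLM.hasDerivAt (x := r)).mul_const (Complex.exp (Complex.I * θ))

lemma pz_periodic (r : ℝ) : Function.Periodic (fun θ => pz r θ) (2 * Real.pi) := by
  intro θ
  simp only [pz]
  congr 1
  rw [Complex.ofReal_add, mul_add, Complex.exp_add]
  rw [show Complex.I * (2 * Real.pi : ℝ) = 2 * Real.pi * Complex.I by push_cast; ring,
    Complex.exp_two_pi_mul_I, mul_one]

lemma continuous_pz : Continuous fun p : ℝ × ℝ => pz p.1 p.2 := by
  unfold pz; fun_prop

section core

variable {ρ : ℝ} {u : ℂ → ℂ} {f' : ℂ → ℂ →L[ℝ] ℂ}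

/-- angular derivative `∂_θ v` -/
def tb (f' : ℂ → ℂ →L[ℝ] ℂ) (r θ : ℝ) : ℂ := f' (pz r θ) (Complex.I * pz r θ)
/-- radial derivative `∂_r v` -/
def rb (f' : ℂ → ℂ →L[ℝ] ℂ) (r θ : ℝ) : ℂ := f' (pz r θ) (Complex.exp (Complex.I * (θ:ℂ)))

lemma hasDerivAt_theta (hρ0 : 0 < ρ)
    (hd : ∀ w ∈ cann ρ, HasFDerivWithinAt u (f' w) (cann ρ) w)
    {r : ℝ} (hr : r ∈ Icc ρ 1) (θ : ℝ) :
    HasDerivAt (fun t : ℝ => u (pz r t)) (tb f' r θ) θ := by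
  have h := (hd _ (pz_mem hρ0 hr θ)).comp_hasDerivWithinAt θ
    ((hasDerivAt_pz_theta r θ).hasDerivWithinAt (s := univ))
    (fun t _ => pz_mem hρ0 hr t)
  rw [hasDerivWithinAt_univ] at h
  exact h

lemma hasDerivWithinAt_radial (hρ0 : 0 < ρ)
    (hd : ∀ w ∈ cann ρ, HasFDerivWithinAt u (f' w) (cann ρ) w)
    {r : ℝ} (hr : r ∈ Icc ρ 1) (θ : ℝ) :
    HasDerivWithinAt (fun s : ℝ => u (pz s θ)) (rb f' r θ) (Icc ρ 1) r :=
  (hd _ (pz_mem hρ0 hr θ)).comp_hasDerivWithinAt r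
    ((hasDerivAt_pz_radial r θ).hasDerivWithinAt)
    (fun s hs => pz_mem hρ0 hs θ)

lemma continuousOn_v (hρ0 : 0 < ρ)
    (hd : ∀ w ∈ cann ρ, HasFDerivWithinAt u (f' w) (cann ρ) w) :
    ContinuousOn (fun p : ℝ × ℝ => u (pz p.1 p.2)) (Icc ρ 1 ×ˢ (univ : Set ℝ)) := by
  have hu : ContinuousOn u (cann ρ) := fun w hw => (hd w hw).continuousWithinAt
  exact hu.comp continuous_pz.continuousOn (fun p hp => pz_mem hρ0 hp.1 p.2)

lemma continuousOn_tb (hρ0 : 0 < ρ) (hc : ContinuousOn f' (cann ρ)) :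
    ContinuousOn (fun p : ℝ × ℝ => tb f' p.1 p.2) (Icc ρ 1 ×ˢ (univ : Set ℝ)) := by
  apply ContinuousOn.clm_apply
  · exact hc.comp continuous_pz.continuousOn (fun p hp => pz_mem hρ0 hp.1 p.2)
  · exact (continuous_const.mul continuous_pz).continuousOn

lemma continuousOn_rb (hρ0 : 0 < ρ) (hc : ContinuousOn f' (cann ρ)) :
    ContinuousOn (fun p : ℝ × ℝ => rb f' p.1 p.2) (Icc ρ 1 ×ˢ (univ : Set ℝ)) := by
  apply ContinuousOn.clm_apply
  · exact hc.comp continuous_pz.continuousOn (fun p hp => pz_mem hρ0 hp.1 p.2)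
  · fun_prop

lemma exists_bound (hρ0 : 0 < ρ) (hc : ContinuousOn f' (cann ρ)) :
    ∃ M : ℝ, 0 ≤ M ∧ ∀ r ∈ Icc ρ 1, ∀ θ : ℝ,
      ‖rb f' r θ‖ ≤ M ∧ ‖tb f' r θ‖ ≤ M := by
  obtain ⟨C, hC⟩ := (isCompact_cann ρ).exists_bound_of_continuousOn hc
  refine ⟨max C 0, le_max_right _ _, fun r hr θ => ?_⟩
  have hmem := pz_mem hρ0 hr θ
  have hCb : ‖f' (pz r θ)‖ ≤ max C 0 := (hC _ hmem).trans (le_max_left _ _)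
  have h1 : ‖rb f' r θ‖ ≤ ‖f' (pz r θ)‖ * ‖Complex.exp (Complex.I * (θ:ℂ))‖ :=
    (f' (pz r θ)).le_opNorm _
  have h2 : ‖tb f' r θ‖ ≤ ‖f' (pz r θ)‖ * ‖Complex.I * pz r θ‖ :=
    (f' (pz r θ)).le_opNorm _
  have he : ‖Complex.exp (Complex.I * (θ:ℂ))‖ = 1 := by
    simp [Complex.norm_exp]
  have hz : ‖Complex.I * pz r θ‖ ≤ 1 := by
    rw [norm_mul]
    simp only [Complex.norm_I, one_mul, abs_pz]
    rw [abs_of_pos (lt_of_lt_of_le hρ0 hr.1)]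
    exact hr.2
  constructor
  · rw [he, mul_one] at h1; exact h1.trans hCb
  · refine h2.trans ?_
    calc ‖f' (pz r θ)‖ * ‖Complex.I * pz r θ‖ ≤ max C 0 * 1 := by
          apply mul_le_mul hCb hz (norm_nonneg _) (le_max_right _ _)
      _ = max C 0 := mul_one _
end core

lemma HasDerivAt.wedge' {f g : ℝ → ℂ} {f' g' : ℂ} {x : ℝ}
    (hf : HasDerivAt f f' x) (hg : HasDerivAt g g' x) :
    HasDerivAt (fun t => (f t).re * (g t).im - (f t).im * (g t).re)
      ((f'.re * (g x).im - f'.im * (g x).re) + ((f x).re * g'.im - (f x).im * g'.re)) x := by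
  have hfre : HasDerivAt (fun t => (f t).re) f'.re x :=
    (Complex.reCLM.hasFDerivAt.comp_hasDerivAt x hf)
  have hfim : HasDerivAt (fun t => (f t).im) f'.im x :=
    (Complex.imCLM.hasFDerivAt.comp_hasDerivAt x hf)
  have hgre : HasDerivAt (fun t => (g t).re) g'.re x :=
    (Complex.reCLM.hasFDerivAt.comp_hasDerivAt x hg)
  have hgim : HasDerivAt (fun t => (g t).im) g'.im x :=
    (Complex.imCLM.hasFDerivAt.comp_hasDerivAt x hg)
  have := (hfre.mul hgim).sub (hfim.mul hgre)
  refine this.congr_deriv ?_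
  ring

lemma slope_eqc (f : ℝ → ℂ) (r s : ℝ) : slope f r s = (s - r)⁻¹ • (f s - f r) :=
  slope_def_module f r s

lemma norm_slope_le {f : ℝ → ℂ} {M r s : ℝ} (hrs : s ≠ r) (h : ‖f s - f r‖ ≤ M * ‖s - r‖) :
    ‖slope f r s‖ ≤ M := by
  have hpos : (0:ℝ) < |s - r| := abs_pos.2 (sub_ne_zero.2 hrs)
  rw [slope_eqc, norm_smul, norm_inv, Real.norm_eq_abs]
  rw [Real.norm_eq_abs] at h
  calc |s - r|⁻¹ * ‖f s - f r‖ ≤ |s - r|⁻¹ * (M * |s - r|) := by gcongr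
    _ = M := by field_simp

lemma hasDerivAt_wedge {f g : ℝ → ℂ} {f' g' : ℂ} {x : ℝ}
    (hf : HasDerivAt f f' x) (hg : HasDerivAt g g' x) :
    HasDerivAt (fun t => wedge (f t) (g t)) (wedge f' (g x) + wedge (f x) g') x :=
  hf.wedge' hg

section core2

variable {ρ : ℝ} {u : ℂ → ℂ} {f' : ℂ → ℂ →L[ℝ] ℂ}

lemma cont_v_theta (hρ0 : 0 < ρ)
    (hd : ∀ w ∈ cann ρ, HasFDerivWithinAt u (f' w) (cann ρ) w)
    {r : ℝ} (hr : r ∈ Icc ρ 1) : Continuous fun θ => u (pz r θ) := by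
  have h := (continuousOn_v hρ0 hd (f' := f')).comp_continuous
    (Continuous.prodMk continuous_const continuous_id)
    (fun θ => by exact ⟨hr, mem_univ θ⟩)
  exact h

lemma cont_tb_theta (hρ0 : 0 < ρ) (hc : ContinuousOn f' (cann ρ))
    {r : ℝ} (hr : r ∈ Icc ρ 1) : Continuous fun θ => tb f' r θ := by
  exact (continuousOn_tb hρ0 hc).comp_continuous
    (Continuous.prodMk continuous_const continuous_id)
    (fun θ => by exact ⟨hr, mem_univ θ⟩)

lemma cont_rb_theta (hρ0 : 0 < ρ) (hc : ContinuousOn f' (cann ρ))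
    {r : ℝ} (hr : r ∈ Icc ρ 1) : Continuous fun θ => rb f' r θ := by
  exact (continuousOn_rb hρ0 hc).comp_continuous
    (Continuous.prodMk continuous_const continuous_id)
    (fun θ => by exact ⟨hr, mem_univ θ⟩)

lemma cont_tb_radial (hρ0 : 0 < ρ) (hc : ContinuousOn f' (cann ρ)) (θ : ℝ) :
    ContinuousOn (fun r => tb f' r θ) (Icc ρ 1) := by
  have h := (continuousOn_tb hρ0 hc).comp
    (Continuous.prodMk continuous_id (continuous_const (y := θ))).continuousOn
    (fun r hr => by exact ⟨hr, mem_univ θ⟩)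
  exact h

lemma cont_rb_radial (hρ0 : 0 < ρ) (hc : ContinuousOn f' (cann ρ)) (θ : ℝ) :
    ContinuousOn (fun r => rb f' r θ) (Icc ρ 1) := by
  have h := (continuousOn_rb hρ0 hc).comp
    (Continuous.prodMk continuous_id (continuous_const (y := θ))).continuousOn
    (fun r hr => by exact ⟨hr, mem_univ θ⟩)
  exact h

/-- The integration-by-parts vanishing term. -/
lemma ibp_zero (hρ0 : 0 < ρ)
    (hd : ∀ w ∈ cann ρ, HasFDerivWithinAt u (f' w) (cann ρ) w)
    (hc : ContinuousOn f' (cann ρ))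
    {r s : ℝ} (hr : r ∈ Icc ρ 1) (hs : s ∈ Icc ρ 1) :
    ∫ θ in (0:ℝ)..(2*Real.pi),
      (wedge (u (pz r θ)) (tb f' s θ) - wedge (u (pz s θ)) (tb f' r θ)) = 0 := by
  have hder : ∀ θ : ℝ, HasDerivAt (fun t => wedge (u (pz r t)) (u (pz s t)))
      (wedge (u (pz r θ)) (tb f' s θ) - wedge (u (pz s θ)) (tb f' r θ)) θ := by
    intro θ
    have h := hasDerivAt_wedge (hasDerivAt_theta hρ0 hd hr θ) (hasDerivAt_theta hρ0 hd hs θ)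
    convert h using 1
    unfold wedge; ring
  have hcont : Continuous fun θ =>
      wedge (u (pz r θ)) (tb f' s θ) - wedge (u (pz s θ)) (tb f' r θ) := by
    have h1 := cont_v_theta hρ0 hd hr
    have h2 := cont_v_theta hρ0 hd hs
    have h3 := cont_tb_theta hρ0 hc hr
    have h4 := cont_tb_theta hρ0 hc hs
    exact (continuous_wedge.comp (h1.prodMk h4)).sub (continuous_wedge.comp (h2.prodMk h3))
  rw [intervalIntegral.integral_eq_sub_of_hasDerivAt (fun θ _ => hder θ)
    (hcont.intervalIntegrable _ _)]
  have hper : ∀ t ∈ Icc ρ 1, u (pz t (2*Real.pi)) = u (pz t 0) := by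
    intro t _
    congr 1
    have := pz_periodic t 0
    simpa using this
  rw [hper r hr, hper s hs, sub_self]

end core2
section core3

variable {ρ : ℝ} {u : ℂ → ℂ} {f' : ℂ → ℂ →L[ℝ] ℂ}

/-- circle functional `G(r) = ∫ v ∧ v_θ dθ` -/
def GG (u : ℂ → ℂ) (f' : ℂ → ℂ →L[ℝ] ℂ) (r : ℝ) : ℝ :=
  ∫ θ in (0:ℝ)..(2*Real.pi), wedge (u (pz r θ)) (tb f' r θ)

/-- `L(r) = 2 ∫ v_r ∧ v_θ dθ` -/
def LL (f' : ℂ → ℂ →L[ℝ] ℂ) (r : ℝ) : ℝ :=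
  ∫ θ in (0:ℝ)..(2*Real.pi), 2 * wedge (rb f' r θ) (tb f' r θ)

lemma GG_sub (hρ0 : 0 < ρ)
    (hd : ∀ w ∈ cann ρ, HasFDerivWithinAt u (f' w) (cann ρ) w)
    (hc : ContinuousOn f' (cann ρ))
    {r s : ℝ} (hr : r ∈ Icc ρ 1) (hs : s ∈ Icc ρ 1) :
    GG u f' s - GG u f' r = ∫ θ in (0:ℝ)..(2*Real.pi),
      (2 * wedge (u (pz s θ) - u (pz r θ)) (tb f' r θ)
        + wedge (u (pz s θ) - u (pz r θ)) (tb f' s θ - tb f' r θ)) := by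
  have cvr := cont_v_theta hρ0 hd hr
  have cvs := cont_v_theta hρ0 hd hs
  have ctr := cont_tb_theta hρ0 hc hr
  have cts := cont_tb_theta hρ0 hc hs
  have i1 : IntervalIntegrable (fun θ => wedge (u (pz s θ)) (tb f' s θ))
      volume 0 (2*Real.pi) := (continuous_wedge.comp (cvs.prodMk cts)).intervalIntegrable _ _
  have i2 : IntervalIntegrable (fun θ => wedge (u (pz r θ)) (tb f' r θ))
      volume 0 (2*Real.pi) := (continuous_wedge.comp (cvr.prodMk ctr)).intervalIntegrable _ _
  have i3 : IntervalIntegrable (fun θ =>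
      2 * wedge (u (pz s θ) - u (pz r θ)) (tb f' r θ)
        + wedge (u (pz s θ) - u (pz r θ)) (tb f' s θ - tb f' r θ)) volume 0 (2*Real.pi) := by
    apply IntervalIntegrable.add
    · exact (continuous_const.mul (continuous_wedge.comp ((cvs.sub cvr).prodMk ctr))).intervalIntegrable _ _
    · exact (continuous_wedge.comp ((cvs.sub cvr).prodMk (cts.sub ctr))).intervalIntegrable _ _
  have i4 : IntervalIntegrable (fun θ =>
      wedge (u (pz r θ)) (tb f' s θ) - wedge (u (pz s θ)) (tb f' r θ)) volume 0 (2*Real.pi) :=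
    ((continuous_wedge.comp (cvr.prodMk cts)).sub
      (continuous_wedge.comp (cvs.prodMk ctr))).intervalIntegrable _ _
  have e1 : GG u f' s - GG u f' r = ∫ θ in (0:ℝ)..(2*Real.pi),
      (wedge (u (pz s θ)) (tb f' s θ) - wedge (u (pz r θ)) (tb f' r θ)) :=
    (intervalIntegral.integral_sub i1 i2).symm
  rw [e1]
  have e2 : ∀ θ : ℝ, wedge (u (pz s θ)) (tb f' s θ) - wedge (u (pz r θ)) (tb f' r θ)
      = (2 * wedge (u (pz s θ) - u (pz r θ)) (tb f' r θ)
        + wedge (u (pz s θ) - u (pz r θ)) (tb f' s θ - tb f' r θ))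
      + (wedge (u (pz r θ)) (tb f' s θ) - wedge (u (pz s θ)) (tb f' r θ)) := by
    intro θ
    simp only [wedge, Complex.sub_re, Complex.sub_im]
    ring
  rw [intervalIntegral.integral_congr (fun θ _ => e2 θ),
    intervalIntegral.integral_add i3 i4, ibp_zero hρ0 hd hc hr hs, add_zero]

lemma wedge_zero_right (a : ℂ) : wedge a 0 = 0 := by simp [wedge]

lemma hasDerivWithinAt_GG (hρ0 : 0 < ρ)
    (hd : ∀ w ∈ cann ρ, HasFDerivWithinAt u (f' w) (cann ρ) w)
    (hc : ContinuousOn f' (cann ρ))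
    {r : ℝ} (hr : r ∈ Icc ρ 1) :
    HasDerivWithinAt (GG u f') (LL f' r) (Icc ρ 1) r := by
  obtain ⟨M, hM0, hM⟩ := exists_bound hρ0 hc
  rw [hasDerivWithinAt_iff_tendsto_slope]
  have hDCT := intervalIntegral.tendsto_integral_filter_of_dominated_convergence
    (μ := volume) (a := 0) (b := 2*Real.pi)
    (l := 𝓝[Icc ρ 1 \ {r}] r)
    (F := fun s θ => 2 * wedge (slope (fun t => u (pz t θ)) r s) (tb f' r θ)
        + wedge (slope (fun t => u (pz t θ)) r s) (tb f' s θ - tb f' r θ))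
    (f := fun θ => 2 * wedge (rb f' r θ) (tb f' r θ))
    (bound := fun _ => 8 * M * M)
    (by -- measurability
      filter_upwards [self_mem_nhdsWithin] with s hs
      have hsI : s ∈ Icc ρ 1 := hs.1
      have hcont : Continuous fun θ => 2 * wedge (slope (fun t => u (pz t θ)) r s) (tb f' r θ)
          + wedge (slope (fun t => u (pz t θ)) r s) (tb f' s θ - tb f' r θ) := by
        have hsl : Continuous fun θ => slope (fun t => u (pz t θ)) r s := by
          simp only [slope_eqc]
          exact (continuous_const (y := (s - r)⁻¹)).smul ((cont_v_theta hρ0 hd hsI).sub (cont_v_theta hρ0 hd hr))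
        have h1 := cont_tb_theta hρ0 hc hr
        have h2 := cont_tb_theta hρ0 hc hsI
        exact (continuous_const.mul (continuous_wedge.comp (hsl.prodMk h1))).add
          (continuous_wedge.comp (hsl.prodMk (h2.sub h1)))
      exact hcont.aestronglyMeasurable
    )
    (by -- bound
      filter_upwards [self_mem_nhdsWithin] with s hs
      apply ae_of_all
      intro θ _
      have hsI : s ∈ Icc ρ 1 := hs.1
      have hsne : s ≠ r := by
        intro h; exact hs.2 (by simp [h])
      have hmvt : ‖u (pz s θ) - u (pz r θ)‖ ≤ M * ‖s - r‖ :=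
        Convex.norm_image_sub_le_of_norm_hasDerivWithin_le
          (fun t ht => hasDerivWithinAt_radial hρ0 hd ht θ)
          (fun t ht => by exact (hM t ht θ).1)
          (convex_Icc ρ 1) hr hsI
      have hA : ‖slope (fun t => u (pz t θ)) r s‖ ≤ M := norm_slope_le hsne hmvt
      have hB : ‖tb f' r θ‖ ≤ M := (hM r hr θ).2
      have hC : ‖tb f' s θ - tb f' r θ‖ ≤ 2 * M := by
        calc ‖tb f' s θ - tb f' r θ‖
            ≤ ‖tb f' s θ‖ + ‖tb f' r θ‖ := by
              exact (norm_sub_le _ _)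
          _ ≤ 2 * M := by have := (hM s hsI θ).2; linarith
      have hA' : ‖slope (fun t => u (pz t θ)) r s‖ ≤ M := by
        exact hA
      have e1 : |2 * wedge (slope (fun t => u (pz t θ)) r s) (tb f' r θ)| ≤ 2 * (2 * M * M) := by
        rw [abs_mul]
        have := abs_wedge_le (slope (fun t => u (pz t θ)) r s) (tb f' r θ)
        have h0a := norm_nonneg (slope (fun t => u (pz t θ)) r s)
        have h0b := norm_nonneg (tb f' r θ)
        have hW : |wedge (slope (fun t => u (pz t θ)) r s) (tb f' r θ)| ≤ 2 * M * M := by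
          refine this.trans ?_
          nlinarith
        have h22 : |(2:ℝ)| = 2 := by norm_num
        rw [h22]
        linarith
      have e2 : |wedge (slope (fun t => u (pz t θ)) r s) (tb f' s θ - tb f' r θ)|
          ≤ 2 * M * (2 * M) := by
        have := abs_wedge_le (slope (fun t => u (pz t θ)) r s) (tb f' s θ - tb f' r θ)
        have h0a := norm_nonneg (slope (fun t => u (pz t θ)) r s)
        have h0c := norm_nonneg (tb f' s θ - tb f' r θ)
        refine this.trans ?_
        nlinarith
      calc ‖2 * wedge (slope (fun t => u (pz t θ)) r s) (tb f' r θ)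
            + wedge (slope (fun t => u (pz t θ)) r s) (tb f' s θ - tb f' r θ)‖
          ≤ |2 * wedge (slope (fun t => u (pz t θ)) r s) (tb f' r θ)|
            + |wedge (slope (fun t => u (pz t θ)) r s) (tb f' s θ - tb f' r θ)| := by
            rw [Real.norm_eq_abs]; exact abs_add_le _ _
        _ ≤ 2 * (2 * M * M) + 2 * M * (2 * M) := add_le_add e1 e2
        _ = 8 * M * M := by ring
    )
    (intervalIntegrable_const)
    (by -- pointwise limit
      apply ae_of_all
      intro θ _
      have h1 : Tendsto (fun s => slope (fun t => u (pz t θ)) r s)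
          (𝓝[Icc ρ 1 \ {r}] r) (𝓝 (rb f' r θ)) :=
        hasDerivWithinAt_iff_tendsto_slope.mp (hasDerivWithinAt_radial hρ0 hd hr θ)
      have h2 : Tendsto (fun s => tb f' s θ) (𝓝[Icc ρ 1 \ {r}] r) (𝓝 (tb f' r θ)) :=
        ((cont_tb_radial hρ0 hc θ) r hr).mono_left (nhdsWithin_mono r diff_subset)
      have hw1 : Tendsto (fun s => wedge (slope (fun t => u (pz t θ)) r s) (tb f' r θ))
          (𝓝[Icc ρ 1 \ {r}] r) (𝓝 (wedge (rb f' r θ) (tb f' r θ))) :=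
        (continuous_wedge.tendsto _).comp (h1.prodMk_nhds tendsto_const_nhds)
      have h3 : Tendsto (fun s => tb f' s θ - tb f' r θ) (𝓝[Icc ρ 1 \ {r}] r) (𝓝 0) := by
        have := h2.sub (tendsto_const_nhds (x := tb f' r θ))
        simpa using this
      have hw2 : Tendsto (fun s => wedge (slope (fun t => u (pz t θ)) r s)
            (tb f' s θ - tb f' r θ))
          (𝓝[Icc ρ 1 \ {r}] r) (𝓝 (wedge (rb f' r θ) 0)) :=
        (continuous_wedge.tendsto _).comp (h1.prodMk_nhds h3)
      have := (hw1.const_mul 2).add hw2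
      simpa [wedge_zero_right] using this
    )
  refine hDCT.congr' ?_
  filter_upwards [self_mem_nhdsWithin] with s hs
  have hsI : s ∈ Icc ρ 1 := hs.1
  have hsne : s ≠ r := by intro h; exact hs.2 (by simp [h])
  have hne : s - r ≠ 0 := sub_ne_zero.2 hsne
  show (∫ θ in (0:ℝ)..(2*Real.pi), _) = slope (GG u f') r s
  rw [slope_def_module, GG_sub hρ0 hd hc hr hsI, smul_eq_mul, ← intervalIntegral.integral_const_mul]
  apply intervalIntegral.integral_congr
  intro θ _
  simp only [slope_eqc, wedge_smul_left]
  ring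

end core3
section core4

variable {ρ : ℝ} {u : ℂ → ℂ} {f' : ℂ → ℂ →L[ℝ] ℂ}

lemma continuousOn_LL (hρ0 : 0 < ρ) (hc : ContinuousOn f' (cann ρ)) :
    ContinuousOn (LL f') (Icc ρ 1) := by
  obtain ⟨M, hM0, hM⟩ := exists_bound hρ0 hc
  intro r hr
  unfold ContinuousWithinAt
  have hDCT := intervalIntegral.tendsto_integral_filter_of_dominated_convergence
    (μ := volume) (a := 0) (b := 2*Real.pi)
    (l := 𝓝[Icc ρ 1] r)
    (F := fun s θ => 2 * wedge (rb f' s θ) (tb f' s θ))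
    (f := fun θ => 2 * wedge (rb f' r θ) (tb f' r θ))
    (bound := fun _ => 2 * (2 * M * M))
    (by
      filter_upwards [self_mem_nhdsWithin] with s hs
      exact (continuous_const.mul (continuous_wedge.comp
        ((cont_rb_theta hρ0 hc hs).prodMk (cont_tb_theta hρ0 hc hs)))).aestronglyMeasurable
    )
    (by
      filter_upwards [self_mem_nhdsWithin] with s hs
      apply ae_of_all
      intro θ _
      have h1 := (hM s hs θ).1
      have h2 := (hM s hs θ).2
      have h3 := abs_wedge_le (rb f' s θ) (tb f' s θ)
      have h4 := norm_nonneg (rb f' s θ)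
      have h5 := norm_nonneg (tb f' s θ)
      rw [Real.norm_eq_abs, abs_mul]
      have h22 : |(2:ℝ)| = 2 := by norm_num
      rw [h22]
      have : |wedge (rb f' s θ) (tb f' s θ)| ≤ 2 * M * M := by
        refine h3.trans ?_; nlinarith
      linarith
    )
    (intervalIntegrable_const)
    (by
      apply ae_of_all
      intro θ _
      have h1 : Tendsto (fun s => rb f' s θ) (𝓝[Icc ρ 1] r) (𝓝 (rb f' r θ)) :=
        (cont_rb_radial hρ0 hc θ) r hr
      have h2 : Tendsto (fun s => tb f' s θ) (𝓝[Icc ρ 1] r) (𝓝 (tb f' r θ)) :=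
        (cont_tb_radial hρ0 hc θ) r hr
      exact ((continuous_wedge.tendsto _).comp (h1.prodMk_nhds h2)).const_mul 2
    )
  exact hDCT

lemma GG_ftc (hρ0 : 0 < ρ) (hρ1 : ρ < 1)
    (hd : ∀ w ∈ cann ρ, HasFDerivWithinAt u (f' w) (cann ρ) w)
    (hc : ContinuousOn f' (cann ρ)) :
    ∫ r in ρ..(1:ℝ), LL f' r = GG u f' 1 - GG u f' ρ := by
  apply intervalIntegral.integral_eq_sub_of_hasDeriv_right_of_le hρ1.le
  · intro r hr
    exact (hasDerivWithinAt_GG hρ0 hd hc hr).continuousWithinAt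
  · intro r hr
    have h1 : Icc ρ 1 ∈ 𝓝 r := Icc_mem_nhds hr.1 hr.2
    exact (((hasDerivWithinAt_GG hρ0 hd hc (mem_Icc_of_Ioo hr)).hasDerivAt h1).hasDerivWithinAt)
  · exact (continuousOn_LL hρ0 hc).intervalIntegrable_of_Icc hρ1.le

end core4
section core5

variable {ρ : ℝ} {u : ℂ → ℂ} {f' : ℂ → ℂ →L[ℝ] ℂ}

lemma wedge_expand (c1 s1 c2 s2 : ℝ) (X Y : ℂ) :
    wedge (c1 • X + s1 • Y) (c2 • X + s2 • Y) = (c1 * s2 - s1 * c2) * wedge X Y := by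
  simp only [wedge, Complex.add_re, Complex.add_im, Complex.real_smul, Complex.mul_re,
    Complex.mul_im, Complex.ofReal_re, Complex.ofReal_im]
  ring

lemma exp_I_two_pi_add (θ : ℝ) :
    Complex.exp (Complex.I * ((θ + 2*Real.pi : ℝ) : ℂ)) = Complex.exp (Complex.I * θ) := by
  rw [Complex.ofReal_add, mul_add, Complex.exp_add,
    show Complex.I * ((2*Real.pi : ℝ) : ℂ) = 2 * Real.pi * Complex.I by push_cast; ring,
    Complex.exp_two_pi_mul_I, mul_one]

lemma pz_add_two_pi (r θ : ℝ) : pz r (θ + 2*Real.pi) = pz r θ := by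
  unfold pz; rw [exp_I_two_pi_add]

lemma polarCoord_symm_eq_pz (r θ : ℝ) : Complex.polarCoord.symm (r, θ) = pz r θ := by
  rw [Complex.polarCoord_symm_apply]
  unfold pz
  rw [mul_comm Complex.I, Complex.exp_mul_I, ← Complex.ofReal_cos, ← Complex.ofReal_sin]

lemma exp_I_decomp (θ : ℝ) : Complex.exp (Complex.I * (θ:ℂ))
    = (Real.cos θ) • (1:ℂ) + (Real.sin θ) • Complex.I := by
  rw [mul_comm Complex.I, Complex.exp_mul_I, ← Complex.ofReal_cos, ← Complex.ofReal_sin]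
  simp [Complex.real_smul]

lemma I_mul_pz_decomp (r θ : ℝ) : Complex.I * pz r θ
    = (-(r * Real.sin θ)) • (1:ℂ) + (r * Real.cos θ) • Complex.I := by
  unfold pz
  rw [mul_comm Complex.I ((θ:ℂ)), Complex.exp_mul_I, ← Complex.ofReal_cos, ← Complex.ofReal_sin]
  simp only [Complex.real_smul]
  push_cast
  ring_nf
  rw [Complex.I_sq]
  ring

lemma wedge_rb_tb (r θ : ℝ) :
    wedge (rb f' r θ) (tb f' r θ) = r * wedge (f' (pz r θ) 1) (f' (pz r θ) Complex.I) := by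
  have h1 : rb f' r θ = (Real.cos θ) • (f' (pz r θ) 1) + (Real.sin θ) • (f' (pz r θ) Complex.I) := by
    unfold rb
    rw [exp_I_decomp, map_add, _root_.map_smul, _root_.map_smul]
  have h2 : tb f' r θ = (-(r * Real.sin θ)) • (f' (pz r θ) 1)
      + (r * Real.cos θ) • (f' (pz r θ) Complex.I) := by
    unfold tb
    rw [I_mul_pz_decomp, map_add, _root_.map_smul, _root_.map_smul]
  rw [h1, h2, wedge_expand]
  have hpy := Real.sin_sq_add_cos_sq θ
  linear_combination (r * wedge (f' (pz r θ) 1) (f' (pz r θ) Complex.I)) * hpy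

end core5
section core6

variable {ρ : ℝ} {f' : ℂ → ℂ →L[ℝ] ℂ}

/-- the Jacobian integrand `u_x ∧ u_y` -/
def WW (f' : ℂ → ℂ →L[ℝ] ℂ) (w : ℂ) : ℝ := wedge (f' w 1) (f' w Complex.I)

lemma polar_step (hρ0 : 0 < ρ) (hρ1 : ρ < 1) (hc : ContinuousOn f' (cann ρ)) :
    ∫ z in ann ρ, WW f' z
      = ∫ r in ρ..(1:ℝ), ∫ θ in (0:ℝ)..(2*Real.pi), wedge (rb f' r θ) (tb f' r θ) := by
  have hπ := Real.pi_pos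
  have hWc : ContinuousOn (WW f') (cann ρ) := by
    unfold WW
    exact continuous_wedge.comp_continuousOn
      ((hc.clm_apply continuousOn_const).prodMk (hc.clm_apply continuousOn_const))
  have hsymmc : Continuous fun p : ℝ × ℝ => Complex.polarCoord.symm p := by
    simp only [Complex.polarCoord_symm_apply]; fun_prop
  have hmeasann : MeasurableSet (ann ρ) := (isOpen_ann ρ).measurableSet
  rw [← integral_indicator hmeasann]
  rw [← Complex.integral_comp_polarCoord_symm ((ann ρ).indicator (WW f'))]
  rw [show polarCoord.target = Ioi (0:ℝ) ×ˢ Ioo (-Real.pi) Real.pi from rfl]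
  have hstep1 : ∫ p in Ioi (0:ℝ) ×ˢ Ioo (-Real.pi) Real.pi,
        p.1 • (ann ρ).indicator (WW f') (Complex.polarCoord.symm p)
      = ∫ p in Ioi (0:ℝ) ×ˢ Ioo (-Real.pi) Real.pi,
        (Ioo ρ 1 ×ˢ (univ : Set ℝ)).indicator
          (fun q => q.1 • WW f' (Complex.polarCoord.symm q)) p := by
    apply setIntegral_congr_fun (measurableSet_Ioi.prod measurableSet_Ioo)
    intro p hp
    have habs : ‖Complex.polarCoord.symm p‖ = p.1 := by
      rw [Complex.norm_polarCoord_symm, abs_of_pos hp.1]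
    by_cases hmem : p.1 ∈ Ioo ρ 1
    · have hmem' : Complex.polarCoord.symm p ∈ ann ρ :=
        ⟨by rw [habs]; exact hmem.1, by rw [habs]; exact hmem.2⟩
      have hmem'' : p ∈ Ioo ρ 1 ×ˢ (univ : Set ℝ) := ⟨hmem, mem_univ _⟩
      show p.1 • (ann ρ).indicator (WW f') (Complex.polarCoord.symm p) = _
      rw [indicator_of_mem hmem', indicator_of_mem hmem'']
    · have h1 : Complex.polarCoord.symm p ∉ ann ρ := fun hann =>
        hmem ⟨by rw [← habs]; exact hann.1, by rw [← habs]; exact hann.2⟩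
      have h2 : p ∉ Ioo ρ 1 ×ˢ (univ : Set ℝ) := fun hq => hmem hq.1
      show p.1 • (ann ρ).indicator (WW f') (Complex.polarCoord.symm p) = _
      rw [indicator_of_notMem h1, indicator_of_notMem h2, smul_zero]
  rw [hstep1, setIntegral_indicator (measurableSet_Ioo.prod MeasurableSet.univ)]
  have hset : (Ioi (0:ℝ) ×ˢ Ioo (-Real.pi) Real.pi) ∩ (Ioo ρ 1 ×ˢ (univ : Set ℝ))
      = Ioo ρ 1 ×ˢ Ioo (-Real.pi) Real.pi := by
    have hsub : Ioo ρ 1 ⊆ Ioi (0:ℝ) := fun x hx => lt_trans hρ0 hx.1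
    rw [prod_inter_prod, inter_univ, inter_eq_self_of_subset_right hsub]
  rw [hset]
  have hIntc : IntegrableOn (fun p : ℝ×ℝ => p.1 • WW f' (Complex.polarCoord.symm p))
      (Icc ρ 1 ×ˢ Icc (-Real.pi) Real.pi) := by
    apply ContinuousOn.integrableOn_compact (isCompact_Icc.prod isCompact_Icc)
    apply ContinuousOn.smul continuous_fst.continuousOn
    apply hWc.comp hsymmc.continuousOn
    intro p hp
    have h0 : 0 < p.1 := lt_of_lt_of_le hρ0 hp.1.1
    have habs : ‖Complex.polarCoord.symm p‖ = p.1 := by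
      rw [Complex.norm_polarCoord_symm, abs_of_pos h0]
    exact ⟨habs ▸ hp.1.1, habs ▸ hp.1.2⟩
  have hInt : IntegrableOn (fun p : ℝ×ℝ => p.1 • WW f' (Complex.polarCoord.symm p))
      (Ioo ρ 1 ×ˢ Ioo (-Real.pi) Real.pi) :=
    hIntc.mono_set (prod_mono Ioo_subset_Icc_self Ioo_subset_Icc_self)
  rw [Measure.volume_eq_prod] at hInt
  rw [Measure.volume_eq_prod, setIntegral_prod _ hInt]
  have inner_eq : ∀ r ∈ Icc ρ 1,
      (∫ θ in Ioo (-Real.pi) Real.pi,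
        (fun p : ℝ×ℝ => p.1 • WW f' (Complex.polarCoord.symm p)) (r, θ))
      = ∫ θ in (0:ℝ)..(2*Real.pi), wedge (rb f' r θ) (tb f' r θ) := by
    intro r hr
    have hper : Function.Periodic (fun θ => wedge (rb f' r θ) (tb f' r θ)) (2*Real.pi) := by
      intro θ
      show wedge (rb f' r (θ + 2*Real.pi)) (tb f' r (θ + 2*Real.pi)) = _
      unfold rb tb
      rw [pz_add_two_pi, exp_I_two_pi_add]
    have h1 : (∫ θ in Ioo (-Real.pi) Real.pi,
        (fun p : ℝ×ℝ => p.1 • WW f' (Complex.polarCoord.symm p)) (r, θ))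
        = ∫ θ in (-Real.pi)..Real.pi, wedge (rb f' r θ) (tb f' r θ) := by
      rw [intervalIntegral.integral_of_le (by linarith), integral_Ioc_eq_integral_Ioo]
      apply setIntegral_congr_fun measurableSet_Ioo
      intro θ _
      show r • WW f' (Complex.polarCoord.symm (r, θ)) = wedge (rb f' r θ) (tb f' r θ)
      rw [polarCoord_symm_eq_pz, wedge_rb_tb]
      simp [WW, smul_eq_mul]
    rw [h1]
    have h2 := hper.intervalIntegral_add_eq (-Real.pi) 0
    rw [show -Real.pi + 2*Real.pi = Real.pi by ring, zero_add] at h2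
    exact h2
  calc ∫ r in Ioo ρ 1, (∫ θ in Ioo (-Real.pi) Real.pi,
        (fun p : ℝ×ℝ => p.1 • WW f' (Complex.polarCoord.symm p)) (r, θ))
      = ∫ r in Ioo ρ 1, (∫ θ in (0:ℝ)..(2*Real.pi), wedge (rb f' r θ) (tb f' r θ)) :=
        setIntegral_congr_fun measurableSet_Ioo (fun r hr => inner_eq r (Ioo_subset_Icc_self hr))
    _ = ∫ r in ρ..(1:ℝ), ∫ θ in (0:ℝ)..(2*Real.pi), wedge (rb f' r θ) (tb f' r θ) := by
        rw [intervalIntegral.integral_of_le hρ1.le, integral_Ioc_eq_integral_Ioo]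

end core6

section core7


variable {ρ : ℝ} {u : ℂ → ℂ} {f' : ℂ → ℂ →L[ℝ] ℂ}

lemma GG_eq_degCirc (hρ0 : 0 < ρ)
    (hd : ∀ w ∈ cann ρ, HasFDerivWithinAt u (f' w) (cann ρ) w)
    {r : ℝ} (hr : r ∈ Icc ρ 1) :
    GG u f' r = 2 * Real.pi * degCirc u r := by
  have hπ := Real.pi_pos
  have hder : ∀ θ : ℝ, deriv (fun t : ℝ => u ((r:ℂ) * Complex.exp (Complex.I * t))) θ
      = tb f' r θ := fun θ => (hasDerivAt_theta hρ0 hd hr θ).deriv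
  have : degCirc u r = (1 / (2*Real.pi)) * GG u f' r := by
    unfold degCirc GG
    congr 1
    apply intervalIntegral.integral_congr
    intro θ _
    show wedge (u ((r:ℂ) * Complex.exp (Complex.I * θ)))
      (deriv (fun t : ℝ => u ((r:ℂ) * Complex.exp (Complex.I * t))) θ) = wedge (u (pz r θ)) (tb f' r θ)
    rw [hder θ]
    rfl
  rw [this]
  field_simp

theorem key (hρ0 : 0 < ρ) (hρ1 : ρ < 1)
    (hd : ∀ w ∈ cann ρ, HasFDerivWithinAt u (f' w) (cann ρ) w)
    (hc : ContinuousOn f' (cann ρ)) :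
    ∫ z in ann ρ, WW f' z = Real.pi * (degCirc u 1 - degCirc u ρ) := by
  have h1mem : (1:ℝ) ∈ Icc ρ 1 := ⟨hρ1.le, le_refl _⟩
  have hρmem : ρ ∈ Icc ρ 1 := ⟨le_refl _, hρ1.le⟩
  rw [polar_step hρ0 hρ1 hc]
  have h2 : ∀ r ∈ uIcc ρ (1:ℝ), (∫ θ in (0:ℝ)..(2*Real.pi), wedge (rb f' r θ) (tb f' r θ))
      = (1/2) * LL f' r := by
    intro r _
    unfold LL
    rw [intervalIntegral.integral_const_mul]
    ring
  rw [intervalIntegral.integral_congr h2, intervalIntegral.integral_const_mul,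
    GG_ftc hρ0 hρ1 hd hc, GG_eq_degCirc hρ0 hd h1mem, GG_eq_degCirc hρ0 hd hρmem]
  ring


end core7
end
end StokesAux

/-- `∫_{A_ρ} ∂ₓu ∧ ∂_y u = π(p − q)` where `p, q` are the boundary degrees. -/
theorem stmt3 (ρ : ℝ) (hρ0 : 0 < ρ) (hρ1 : ρ < 1) (u : ℂ → ℂ)
    (hreg : ContDiffOn ℝ 1 u (cann ρ))
    (hmod : ∀ z ∈ bdry ρ, ‖u z‖ = 1)
    (p q : ℝ) (hp : p = degCirc u 1) (hq : q = degCirc u ρ) :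
    ∫ z in ann ρ, wedge (pdx u z) (pdy u z) = Real.pi * (p - q) := by
  have hudo := uniqueDiffOn_cann ρ hρ0 hρ1
  set f' : ℂ → ℂ →L[ℝ] ℂ := fun w => fderivWithin ℝ u (cann ρ) w with hf'
  have hdiff : DifferentiableOn ℝ u (cann ρ) := hreg.differentiableOn one_ne_zero
  have hd : ∀ w ∈ cann ρ, HasFDerivWithinAt u (f' w) (cann ρ) w :=
    fun w hw => (hdiff w hw).hasFDerivWithinAt
  have hc : ContinuousOn f' (cann ρ) := hreg.continuousOn_fderivWithin hudo le_rfl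
  have hstep : ∫ z in ann ρ, wedge (pdx u z) (pdy u z) = ∫ z in ann ρ, WW f' z := by
    apply setIntegral_congr_fun (isOpen_ann ρ).measurableSet
    intro z hz
    have hnh : cann ρ ∈ nhds z :=
      Filter.mem_of_superset ((isOpen_ann ρ).mem_nhds hz) (ann_subset_cann ρ)
    have hfd : HasFDerivAt u (f' z) z := (hd z (ann_subset_cann ρ hz)).hasFDerivAt hnh
    show wedge (pdx u z) (pdy u z) = WW f' z
    unfold pdx pdy WW
    rw [hfd.fderiv]
  rw [hstep, key hρ0 hρ1 hd hc, hp, hq]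
end

section
/- Let 0 < ρ < 1 and let x ∈ ℂ with ρ < |x| < 1. Then for every z with ρ ≤ |z| ≤ 1 the infinite product defining f_x(z) converges (each of the factor sequences is multipliable), all its factors and its zeroth-order denominator are nonzero except for the single zero factor at z = x, and for every z with ρ ≤ |z| ≤ 1 and z ≠ x one has the identities f_x(z) · f_{x̄}(1/z) = 1/|x|² and f_x(z) · f_{x̄}(ρ²/z) = 1. -/
open Complex MeasureTheory

open Complex Filter Topology

lemma one_sub_ne_of_abs_ne_one {w : ℂ} (h : ‖w‖ ≠ 1) : (1:ℂ) - w ≠ 0 := by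
  intro hc
  apply h
  have : (1:ℂ) = w := sub_eq_zero.mp hc
  rw [← this]; simp

lemma multipliable_of_summable_sub_one {f : ℕ → ℂ} (hne : ∀ k, f k ≠ 0)
    (hs : Summable (fun k => f k - 1)) : Multipliable f := by
  have hlog : Summable (fun k => Complex.log (f k)) := by
    have h0 : Tendsto (fun k => f k - 1) atTop (nhds 0) := hs.tendsto_atTop_zero
    have hev : ∀ᶠ k in atTop, ‖f k - 1‖ ≤ 1/2 := by
      have := h0.norm
      simp only [norm_zero] at this
      exact this.eventually_le_const (by norm_num : (0:ℝ) < 1/2)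
    apply Summable.of_norm_bounded_eventually_nat (g := fun k => (3/2) * ‖f k - 1‖)
      (hs.norm.mul_left _)
    filter_upwards [hev] with k hk
    have h := Complex.norm_log_one_add_half_le_self hk
    rw [show (1:ℂ) + (f k - 1) = f k by ring] at h
    exact h
  exact Complex.multipliable_of_summable_log hlog

lemma multipliable_div_aux {f g : ℕ → ℂ} (hf : Summable (fun k => f k - 1))
    (hg : Summable (fun k => g k - 1)) (hf0 : ∀ k, f k ≠ 0) (hg0 : ∀ k, g k ≠ 0) :
    Multipliable (fun k => f k / g k) := by
  apply multipliable_of_summable_sub_one (fun k => div_ne_zero (hf0 k) (hg0 k))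
  have h0 : Tendsto (fun k => g k - 1) atTop (nhds 0) := hg.tendsto_atTop_zero
  have hev : ∀ᶠ k in atTop, (1:ℝ)/2 ≤ ‖g k‖ := by
    have := h0.norm
    simp only [norm_zero] at this
    filter_upwards [this.eventually_le_const (by norm_num : (0:ℝ) < 1/2)] with k hk
    have h1 : ‖(1:ℂ)‖ - ‖g k - 1‖ ≤ ‖g k‖ := by
      have h2 : ‖g k - 1‖ = ‖(1:ℂ) - g k‖ := by rw [norm_sub_rev]
      nlinarith [norm_sub_norm_le (1:ℂ) (g k), abs_norm (g k)]
    simp only [norm_one] at h1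
    linarith [hk]
  apply Summable.of_norm_bounded_eventually_nat (g := fun k => 2 * ‖f k - g k‖)
  · exact ((hf.sub hg).congr (fun k => by ring)).norm.mul_left _
  · filter_upwards [hev] with k hk
    have hgk : g k ≠ 0 := hg0 k
    have : f k / g k - 1 = (f k - g k) / g k := by field_simp
    rw [this, norm_div]
    rw [div_le_iff₀ (lt_of_lt_of_le (by norm_num) hk)]
    nlinarith [norm_nonneg (f k - g k), hk]

noncomputable def Ffac (ρ : ℝ) (c : ℂ) (k : ℕ) : ℂ := 1 - (ρ : ℂ) ^ (2 * k) * c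

/-- The `k`-th factor of the infinite product defining `f_x`. -/
noncomputable def fxFactor (ρ : ℝ) (x z : ℂ) (k : ℕ) : ℂ :=
  ((1 - (ρ : ℂ) ^ (2 * k) * z / x) * (1 - (ρ : ℂ) ^ (2 * k) * x / z)) /
    ((1 - (ρ : ℂ) ^ (2 * k) / (z * (starRingEnd ℂ) x)) *
      (1 - (ρ : ℂ) ^ (2 * k) * z * (starRingEnd ℂ) x))

/-- `f_x(z) = [(1 − z/x)/(1 − z·x̄)] · ∏_{k=1}^{∞} fxFactor ρ x z k`. -/
noncomputable def fx (ρ : ℝ) (x z : ℂ) : ℂ :=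
  ((1 - z / x) / (1 - z * (starRingEnd ℂ) x)) * ∏' k : ℕ, fxFactor ρ x z (k + 1)

set_option maxHeartbeats 1000000 in
/-- Convergence of the product defining `f_x`, nonvanishing of its factors (except the single
zero factor at `z = x`), and the two product identities. -/
theorem stmt7 (ρ : ℝ) (hρ0 : 0 < ρ) (hρ1 : ρ < 1) (x : ℂ)
    (hx : ρ < ‖x‖ ∧ ‖x‖ < 1) :
    ∀ z : ℂ, ρ ≤ ‖z‖ → ‖z‖ ≤ 1 →
      (Multipliable (fun k : ℕ => 1 - (ρ : ℂ) ^ (2 * (k + 1)) * z / x) ∧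
       Multipliable (fun k : ℕ => 1 - (ρ : ℂ) ^ (2 * (k + 1)) * x / z) ∧
       Multipliable (fun k : ℕ => 1 - (ρ : ℂ) ^ (2 * (k + 1)) / (z * (starRingEnd ℂ) x)) ∧
       Multipliable (fun k : ℕ => 1 - (ρ : ℂ) ^ (2 * (k + 1)) * z * (starRingEnd ℂ) x) ∧
       Multipliable (fun k : ℕ => fxFactor ρ x z (k + 1))) ∧
      ((1 - z * (starRingEnd ℂ) x ≠ 0) ∧
       (∀ k : ℕ,
          1 - (ρ : ℂ) ^ (2 * (k + 1)) * z / x ≠ 0 ∧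
          1 - (ρ : ℂ) ^ (2 * (k + 1)) * x / z ≠ 0 ∧
          1 - (ρ : ℂ) ^ (2 * (k + 1)) / (z * (starRingEnd ℂ) x) ≠ 0 ∧
          1 - (ρ : ℂ) ^ (2 * (k + 1)) * z * (starRingEnd ℂ) x ≠ 0) ∧
       (1 - z / x = 0 ↔ z = x)) ∧
      (z ≠ x →
        fx ρ x z * fx ρ ((starRingEnd ℂ) x) (1 / z) = 1 / (‖x‖ : ℂ) ^ 2 ∧
        fx ρ x z * fx ρ ((starRingEnd ℂ) x) ((ρ : ℂ) ^ 2 / z) = 1) := by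
  obtain ⟨hr1, hr2⟩ := hx
  intro z hs1 hs2
  have ha0 : 0 < ‖z‖ := lt_of_lt_of_le hρ0 hs1
  have hb0 : 0 < ‖x‖ := lt_trans hρ0 hr1
  have hz0 : z ≠ 0 := by simpa using ha0.ne'
  have hx0 : x ≠ 0 := by simpa using hb0.ne'
  have hxb0 : (starRingEnd ℂ) x ≠ 0 := by simpa using hx0
  have hρC : (ρ : ℂ) ≠ 0 := by
    simpa using (Complex.ofReal_ne_zero.mpr hρ0.ne')
  -- generic nonvanishing criterion
  have key : ∀ (c : ℂ) (k : ℕ), ‖c‖ * ρ ^ (2 * k) < 1 → Ffac ρ c k ≠ 0 := by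
    intro c k h
    unfold Ffac
    apply one_sub_ne_of_abs_ne_one
    rw [norm_mul, norm_pow, Complex.norm_real, Real.norm_eq_abs, abs_of_pos hρ0, mul_comm]
    exact ne_of_lt h
  have hppos : ∀ k : ℕ, (0:ℝ) < ρ ^ k := fun k => pow_pos hρ0 k
  have hple : ∀ k : ℕ, ρ ^ (2 * (k + 1)) ≤ ρ ^ 2 :=
    fun k => pow_le_pow_of_le_one hρ0.le hρ1.le (by omega)
  have hq1 : ∀ k : ℕ, ρ ^ (2 * k) ≤ 1 := fun k => pow_le_one₀ hρ0.le hρ1.le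
  -- nonvanishing of the four families (positive indices)
  have hA1 : ∀ k : ℕ, Ffac ρ (z / x) (k + 1) ≠ 0 := by
    intro k
    apply key
    rw [norm_div, div_mul_eq_mul_div, div_lt_one hb0]
    nlinarith [hple k, hppos (2 * (k + 1)), mul_lt_mul_of_pos_left hr1 hρ0,
      mul_lt_of_lt_one_left hb0 hρ1]
  have hB1 : ∀ k : ℕ, Ffac ρ (x / z) (k + 1) ≠ 0 := by
    intro k
    apply key
    rw [norm_div, div_mul_eq_mul_div, div_lt_one ha0]
    nlinarith [hple k, hppos (2 * (k + 1)), mul_lt_of_lt_one_left hρ0 hρ1]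
  have hC1 : ∀ k : ℕ, Ffac ρ (z * (starRingEnd ℂ) x)⁻¹ (k + 1) ≠ 0 := by
    intro k
    apply key
    rw [norm_inv, norm_mul, Complex.norm_conj, inv_mul_eq_div, div_lt_one (by positivity)]
    nlinarith [hple k, hppos (2 * (k + 1)), mul_le_mul_of_nonneg_right hs1 hρ0.le,
      mul_lt_mul_of_pos_left hr1 ha0]
  have hD : ∀ k : ℕ, Ffac ρ (z * (starRingEnd ℂ) x) k ≠ 0 := by
    intro k
    apply key
    rw [norm_mul, Complex.norm_conj]
    nlinarith [hq1 k, hppos (2 * k), mul_le_of_le_one_left hb0.le hs2]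
  have hC0 : Ffac ρ (z * (starRingEnd ℂ) x)⁻¹ 0 ≠ 0 := by
    unfold Ffac
    apply one_sub_ne_of_abs_ne_one
    rw [norm_mul, norm_pow, Complex.norm_real, Real.norm_eq_abs, abs_of_pos hρ0, norm_inv, norm_mul,
      Complex.norm_conj]
    simp only [Nat.mul_zero, pow_zero, one_mul]
    rw [ne_eq, inv_eq_one]
    nlinarith [mul_le_of_le_one_left hb0.le hs2]
  have hC : ∀ k : ℕ, Ffac ρ (z * (starRingEnd ℂ) x)⁻¹ k ≠ 0 := by
    intro k
    cases k with
    | zero => exact hC0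
    | succ n => exact hC1 n
  -- summability helpers
  have hsum : ∀ (a b : ℕ), 1 ≤ a → ∀ c : ℂ, Summable (fun k : ℕ => (ρ:ℂ)^(a*k+b) * c) := by
    intro a b ha c
    have h : ‖(ρ:ℂ)^a‖ < 1 := by
      rw [norm_pow, Complex.norm_real, Real.norm_eq_abs, abs_of_pos hρ0]
      exact pow_lt_one₀ hρ0.le hρ1 (by omega)
    apply ((summable_geometric_of_norm_lt_one h).mul_right ((ρ:ℂ)^b * c)).congr
    intro k
    rw [← pow_mul, ← mul_assoc, ← pow_add]
  have hsub : ∀ c : ℂ, Summable (fun k : ℕ => Ffac ρ c (k + 1) - 1) := by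
    intro c
    apply (hsum 2 2 (by norm_num) (-c)).congr
    intro k; unfold Ffac; ring
  have hsubP : ∀ (c c' : ℂ) (m m' : ℕ),
      Summable (fun k : ℕ => Ffac ρ c (k + m) * Ffac ρ c' (k + m') - 1) := by
    intro c c' m m'
    have h1 := hsum 2 (2*m) (by norm_num) (-c)
    have h2 := hsum 2 (2*m') (by norm_num) (-c')
    have h3 := hsum 4 (2*m+2*m') (by norm_num) (c*c')
    apply ((h1.add h2).add h3).congr
    intro k; unfold Ffac; ring
  -- factor identities
  have e1 : ∀ k : ℕ, fxFactor ρ x z (k + 1) =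
      (Ffac ρ (z / x) (k + 1) * Ffac ρ (x / z) (k + 1)) /
        (Ffac ρ (z * (starRingEnd ℂ) x)⁻¹ (k + 1) * Ffac ρ (z * (starRingEnd ℂ) x) (k + 1)) := by
    intro k
    unfold fxFactor Ffac
    congr 1 <;> ring
  have M1 : Multipliable (fun k : ℕ => fxFactor ρ x z (k + 1)) := by
    apply Multipliable.congr (f := fun k : ℕ =>
      (Ffac ρ (z / x) (k + 1) * Ffac ρ (x / z) (k + 1)) /
        (Ffac ρ (z * (starRingEnd ℂ) x)⁻¹ (k + 1) * Ffac ρ (z * (starRingEnd ℂ) x) (k + 1)))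
    · exact multipliable_div_aux (hsubP _ _ 1 1) (hsubP _ _ 1 1)
        (fun k => mul_ne_zero (hA1 k) (hB1 k)) (fun k => mul_ne_zero (hC1 k) (hD (k+1)))
    · intro k; exact (e1 k).symm
  refine ⟨⟨?_, ?_, ?_, ?_, M1⟩, ⟨?_, ?_, ?_⟩, ?_⟩
  · exact (multipliable_of_summable_sub_one hA1 (hsub _)).congr
      (fun k => by unfold Ffac; ring)
  · exact (multipliable_of_summable_sub_one hB1 (hsub _)).congr
      (fun k => by unfold Ffac; ring)
  · exact (multipliable_of_summable_sub_one hC1 (hsub _)).congr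
      (fun k => by unfold Ffac; ring)
  · exact (multipliable_of_summable_sub_one (fun k => hD (k+1)) (hsub _)).congr
      (fun k => by unfold Ffac; ring)
  · -- 1 - z * conj x ≠ 0
    have := hD 0
    unfold Ffac at this
    simpa using this
  · intro k
    refine ⟨?_, ?_, ?_, ?_⟩
    · have := hA1 k; unfold Ffac at this
      rw [show 1 - (ρ:ℂ)^(2*(k+1)) * z / x = 1 - (ρ:ℂ)^(2*(k+1)) * (z/x) by ring]
      exact this
    · have := hB1 k; unfold Ffac at this
      rw [show 1 - (ρ:ℂ)^(2*(k+1)) * x / z = 1 - (ρ:ℂ)^(2*(k+1)) * (x/z) by ring]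
      exact this
    · have := hC1 k; unfold Ffac at this
      rw [show 1 - (ρ:ℂ)^(2*(k+1)) / (z * (starRingEnd ℂ) x)
          = 1 - (ρ:ℂ)^(2*(k+1)) * (z * (starRingEnd ℂ) x)⁻¹ by ring]
      exact this
    · have := hD (k+1); unfold Ffac at this
      rw [show 1 - (ρ:ℂ)^(2*(k+1)) * z * (starRingEnd ℂ) x
          = 1 - (ρ:ℂ)^(2*(k+1)) * (z * (starRingEnd ℂ) x) by ring]
      exact this
  · rw [sub_eq_zero]
    constructor
    · intro h; exact (div_eq_one_iff_eq hx0).mp h.symm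
    · intro h; rw [h, div_self hx0]
  · intro hzx
    -- extended nonvanishing at index 0
    have hA0 : Ffac ρ (z / x) 0 ≠ 0 := by
      unfold Ffac
      simp only [Nat.mul_zero, pow_zero, one_mul]
      exact sub_ne_zero_of_ne (fun h => hzx ((div_eq_one_iff_eq hx0).mp h.symm))
    have hA : ∀ k : ℕ, Ffac ρ (z / x) k ≠ 0 := by
      intro k; cases k with
      | zero => exact hA0
      | succ n => exact hA1 n
    have hB0 : Ffac ρ (x / z) 0 ≠ 0 := by
      unfold Ffac
      simp only [Nat.mul_zero, pow_zero, one_mul]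
      exact sub_ne_zero_of_ne (fun h => hzx (((div_eq_one_iff_eq hz0).mp h.symm).symm))
    have hB : ∀ k : ℕ, Ffac ρ (x / z) k ≠ 0 := by
      intro k; cases k with
      | zero => exact hB0
      | succ n => exact hB1 n
    -- subterm identities for f_{x̄}(1/z)
    have t21 : ∀ k : ℕ, 1 - (ρ:ℂ)^(2*k) * (1/z) / ((starRingEnd ℂ) x)
        = Ffac ρ (z * (starRingEnd ℂ) x)⁻¹ k := by
      intro k; unfold Ffac; ring
    have t22 : ∀ k : ℕ, 1 - (ρ:ℂ)^(2*k) * ((starRingEnd ℂ) x) / (1/z)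
        = Ffac ρ (z * (starRingEnd ℂ) x) k := by
      intro k; unfold Ffac; rw [sub_right_inj]; field_simp <;> ring
    have t23 : ∀ k : ℕ, 1 - (ρ:ℂ)^(2*k) / (1/z * x)
        = Ffac ρ (z / x) k := by
      intro k; unfold Ffac; rw [sub_right_inj]; field_simp <;> ring
    have t24 : ∀ k : ℕ, 1 - (ρ:ℂ)^(2*k) * (1/z) * x
        = Ffac ρ (x / z) k := by
      intro k; unfold Ffac; ring
    have e2 : ∀ k : ℕ, fxFactor ρ ((starRingEnd ℂ) x) (1/z) (k + 1) =
        (Ffac ρ (z * (starRingEnd ℂ) x)⁻¹ (k+1) * Ffac ρ (z * (starRingEnd ℂ) x) (k+1)) /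
          (Ffac ρ (z / x) (k+1) * Ffac ρ (x / z) (k+1)) := by
      intro k
      unfold fxFactor
      rw [Complex.conj_conj, t21 (k+1), t22 (k+1), t23 (k+1), t24 (k+1)]
    have M2 : Multipliable (fun k : ℕ => fxFactor ρ ((starRingEnd ℂ) x) (1/z) (k + 1)) := by
      apply Multipliable.congr (f := fun k : ℕ =>
        (Ffac ρ (z * (starRingEnd ℂ) x)⁻¹ (k+1) * Ffac ρ (z * (starRingEnd ℂ) x) (k+1)) /
          (Ffac ρ (z / x) (k+1) * Ffac ρ (x / z) (k+1)))
      · exact multipliable_div_aux (hsubP _ _ 1 1) (hsubP _ _ 1 1)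
          (fun k => mul_ne_zero (hC1 k) (hD (k+1))) (fun k => mul_ne_zero (hA1 k) (hB1 k))
      · intro k; exact (e2 k).symm
    have hP12 : (∏' k : ℕ, fxFactor ρ x z (k+1)) *
        (∏' k : ℕ, fxFactor ρ ((starRingEnd ℂ) x) (1/z) (k+1)) = 1 := by
      rw [← Multipliable.tprod_mul M1 M2]
      have hone : (fun k : ℕ => fxFactor ρ x z (k+1) *
          fxFactor ρ ((starRingEnd ℂ) x) (1/z) (k+1)) = fun _ => (1:ℂ) := by
        funext k
        rw [e1 k, e2 k, div_mul_div_comm,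
          mul_comm (Ffac ρ (z / x) (k + 1) * Ffac ρ (x / z) (k + 1))]
        exact div_self (mul_ne_zero (mul_ne_zero (hC1 k) (hD (k+1)))
          (mul_ne_zero (hA1 k) (hB1 k)))
      rw [hone, tprod_one]
    -- subterm identities for f_{x̄}(ρ²/z)
    have t31 : ∀ k : ℕ, 1 - (ρ:ℂ)^(2*(k+1)) * ((ρ:ℂ)^2/z) / ((starRingEnd ℂ) x)
        = Ffac ρ (z * (starRingEnd ℂ) x)⁻¹ (k+2) := by
      intro k; unfold Ffac; rw [sub_right_inj]; field_simp <;> ring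
    have t32 : ∀ k : ℕ, 1 - (ρ:ℂ)^(2*(k+1)) * ((starRingEnd ℂ) x) / ((ρ:ℂ)^2/z)
        = Ffac ρ (z * (starRingEnd ℂ) x) k := by
      intro k; unfold Ffac; rw [sub_right_inj]; field_simp <;> ring
    have t33 : ∀ k : ℕ, 1 - (ρ:ℂ)^(2*(k+1)) / ((ρ:ℂ)^2/z * x)
        = Ffac ρ (z / x) k := by
      intro k; unfold Ffac; rw [sub_right_inj]; field_simp <;> ring
    have t34 : ∀ k : ℕ, 1 - (ρ:ℂ)^(2*(k+1)) * ((ρ:ℂ)^2/z) * x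
        = Ffac ρ (x / z) (k+2) := by
      intro k; unfold Ffac; rw [sub_right_inj]
      have hpp : (ρ:ℂ)^(2*(k+1)) * (ρ:ℂ)^2 = (ρ:ℂ)^(2*(k+2)) := by ring
      field_simp [hpp]; ring
    have e3 : ∀ k : ℕ, fxFactor ρ ((starRingEnd ℂ) x) ((ρ:ℂ)^2/z) (k + 1) =
        (Ffac ρ (z * (starRingEnd ℂ) x)⁻¹ (k+2) * Ffac ρ (z * (starRingEnd ℂ) x) k) /
          (Ffac ρ (z / x) k * Ffac ρ (x / z) (k+2)) := by
      intro k
      unfold fxFactor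
      rw [Complex.conj_conj, t31 k, t32 k, t33 k, t34 k]
    have M3 : Multipliable (fun k : ℕ =>
        fxFactor ρ ((starRingEnd ℂ) x) ((ρ:ℂ)^2/z) (k + 1)) := by
      apply Multipliable.congr (f := fun k : ℕ =>
        (Ffac ρ (z * (starRingEnd ℂ) x)⁻¹ (k+2) * Ffac ρ (z * (starRingEnd ℂ) x) (k+0)) /
          (Ffac ρ (z / x) (k+0) * Ffac ρ (x / z) (k+2)))
      · exact multipliable_div_aux (hsubP _ _ 2 0) (hsubP _ _ 0 2)
          (fun k => mul_ne_zero (hC (k+2)) (hD k)) (fun k => mul_ne_zero (hA k) (hB (k+2)))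
      · intro k; exact (e3 k).symm
    -- telescoping partial products
    have hprodform : ∀ N : ℕ, (∏ k ∈ Finset.range N,
        (fxFactor ρ x z (k+1) * fxFactor ρ ((starRingEnd ℂ) x) ((ρ:ℂ)^2/z) (k+1))) =
        (Ffac ρ (z/x) N * Ffac ρ (x/z) 1 * Ffac ρ (z*(starRingEnd ℂ) x)⁻¹ (N+1)
          * Ffac ρ (z*(starRingEnd ℂ) x) 0) /
        (Ffac ρ (z/x) 0 * Ffac ρ (x/z) (N+1) * Ffac ρ (z*(starRingEnd ℂ) x)⁻¹ 1
          * Ffac ρ (z*(starRingEnd ℂ) x) N) := by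
      intro N
      induction N with
      | zero =>
        simp only [Finset.prod_range_zero, zero_add]
        exact (div_self (mul_ne_zero (mul_ne_zero (mul_ne_zero (hA 0) (hB 1)) (hC 1))
          (hD 0))).symm
      | succ n ih =>
        rw [Finset.prod_range_succ, ih, e1 n, e3 n,
          show n + 1 + 1 = n + 2 from rfl, div_mul_div_comm, div_mul_div_comm]
        rw [div_eq_div_iff
          (mul_ne_zero (mul_ne_zero (mul_ne_zero (mul_ne_zero (hA 0) (hB (n+1))) (hC 1))
              (hD n))
            (mul_ne_zero (mul_ne_zero (hC (n+1)) (hD (n+1))) (mul_ne_zero (hA n) (hB (n+2)))))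
          (mul_ne_zero (mul_ne_zero (mul_ne_zero (hA 0) (hB (n+2))) (hC 1)) (hD (n+1)))]
        ring
    -- limits
    have hT : ∀ c : ℂ, Tendsto (fun N : ℕ => Ffac ρ c N) atTop (𝓝 1) := by
      intro c
      have h : ‖((ρ:ℂ)^2)‖ < 1 := by
        rw [norm_pow, Complex.norm_real, Real.norm_eq_abs, abs_of_pos hρ0]
        exact pow_lt_one₀ hρ0.le hρ1 (by norm_num)
      have h0 : Tendsto (fun N : ℕ => ((ρ:ℂ)^2)^N * c) atTop (𝓝 0) := by
        simpa using (tendsto_pow_atTop_nhds_zero_of_norm_lt_one h).mul_const c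
      have h2 := h0.const_sub (1:ℂ)
      simp only [sub_zero] at h2
      apply h2.congr
      intro N
      unfold Ffac
      rw [pow_mul]
    have hT' : ∀ c : ℂ, Tendsto (fun N : ℕ => Ffac ρ c (N+1)) atTop (𝓝 1) :=
      fun c => (hT c).comp (tendsto_add_atTop_nat 1)
    have hTq : Tendsto (fun N : ℕ =>
        (Ffac ρ (z/x) N * Ffac ρ (x/z) 1 * Ffac ρ (z*(starRingEnd ℂ) x)⁻¹ (N+1)
          * Ffac ρ (z*(starRingEnd ℂ) x) 0) /
        (Ffac ρ (z/x) 0 * Ffac ρ (x/z) (N+1) * Ffac ρ (z*(starRingEnd ℂ) x)⁻¹ 1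
          * Ffac ρ (z*(starRingEnd ℂ) x) N)) atTop
        (𝓝 ((1 * Ffac ρ (x/z) 1 * 1 * Ffac ρ (z*(starRingEnd ℂ) x) 0) /
            (Ffac ρ (z/x) 0 * 1 * Ffac ρ (z*(starRingEnd ℂ) x)⁻¹ 1 * 1))) := by
      apply Tendsto.div
      · exact (((hT _).mul tendsto_const_nhds).mul (hT' _)).mul tendsto_const_nhds
      · exact ((tendsto_const_nhds.mul (hT' _)).mul tendsto_const_nhds).mul (hT _)
      · exact mul_ne_zero (mul_ne_zero (mul_ne_zero (hA 0) one_ne_zero) (hC 1)) one_ne_zero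
    have hMul : Multipliable (fun k : ℕ => fxFactor ρ x z (k+1) *
        fxFactor ρ ((starRingEnd ℂ) x) ((ρ:ℂ)^2/z) (k+1)) := M1.mul M3
    have htp : (∏' k : ℕ, (fxFactor ρ x z (k+1) *
        fxFactor ρ ((starRingEnd ℂ) x) ((ρ:ℂ)^2/z) (k+1))) =
        (1 * Ffac ρ (x/z) 1 * 1 * Ffac ρ (z*(starRingEnd ℂ) x) 0) /
          (Ffac ρ (z/x) 0 * 1 * Ffac ρ (z*(starRingEnd ℂ) x)⁻¹ 1 * 1) :=
      tendsto_nhds_unique hMul.hasProd.tendsto_prod_nat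
        (hTq.congr (fun N => (hprodform N).symm))
    have hPP : (∏' k : ℕ, fxFactor ρ x z (k+1)) *
        (∏' k : ℕ, fxFactor ρ ((starRingEnd ℂ) x) ((ρ:ℂ)^2/z) (k+1)) =
        (1 * Ffac ρ (x/z) 1 * 1 * Ffac ρ (z*(starRingEnd ℂ) x) 0) /
          (Ffac ρ (z/x) 0 * 1 * Ffac ρ (z*(starRingEnd ℂ) x)⁻¹ 1 * 1) := by
      rw [← Multipliable.tprod_mul M1 M3]; exact htp
    have h40 : 1 - z * (starRingEnd ℂ) x ≠ 0 := by
      have := hD 0; unfold Ffac at this; simpa using this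
    constructor
    · -- first identity
      unfold fx
      rw [Complex.conj_conj, mul_mul_mul_comm, hP12, mul_one]
      have habs2 : ((‖x‖ : ℝ) : ℂ)^2 = x * (starRingEnd ℂ) x := by
        rw [← Complex.ofReal_pow, Complex.sq_norm, Complex.mul_conj]
      rw [habs2]
      have h20 : 1 - 1/z * x ≠ 0 := by
        have := hB0; unfold Ffac at this
        simp only [Nat.mul_zero, pow_zero, one_mul] at this
        rw [show (1:ℂ) - 1/z * x = 1 - x/z by ring]
        exact this
      have hxx : x * (starRingEnd ℂ) x ≠ 0 := mul_ne_zero hx0 hxb0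
      rw [div_mul_div_comm, div_eq_div_iff (mul_ne_zero h40 h20) hxx]
      field_simp
      ring
    · -- second identity
      unfold fx
      rw [Complex.conj_conj, mul_mul_mul_comm, hPP]
      have l1 : (1:ℂ) - z/x = Ffac ρ (z/x) 0 := by
        unfold Ffac; rw [Nat.mul_zero, pow_zero, one_mul]
      have l2 : 1 - z * (starRingEnd ℂ) x = Ffac ρ (z*(starRingEnd ℂ) x) 0 := by
        unfold Ffac; rw [Nat.mul_zero, pow_zero, one_mul]
      have l3 : 1 - ((ρ:ℂ)^2/z)/((starRingEnd ℂ) x) = Ffac ρ (z*(starRingEnd ℂ) x)⁻¹ 1 := by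
        unfold Ffac; rw [mul_one, sub_right_inj]; field_simp <;> ring
      have l4 : 1 - ((ρ:ℂ)^2/z) * x = Ffac ρ (x/z) 1 := by
        unfold Ffac; rw [mul_one, sub_right_inj]; field_simp <;> ring
      rw [l1, l2, l3, l4, div_mul_div_comm, div_mul_div_comm]
      rw [div_eq_one_iff_eq
        (mul_ne_zero (mul_ne_zero (hD 0) (hB 1))
          (mul_ne_zero (mul_ne_zero (mul_ne_zero (hA 0) one_ne_zero) (hC 1)) one_ne_zero))]
      ring
end

section
/- Let 0 < ρ < 1, let p ≥ 1 be an integer and α ∈ ℂ with |α| = 1, and define u_p(z) = α(z^p + ρ^p·z̄^{−p})/(1 + ρ^p) for z ∈ Ā_ρ (so u_p(re^{iθ}) = α(r^p + ρ^p/r^p)e^{ipθ}/(1 + ρ^p)). Then Δu_p = 0 on A_ρ, |u_p(z)| = 1 for all z ∈ ∂A_ρ, u_p(z) ∧ ∂_r u_p(z) = 0 for all z ∈ ∂A_ρ, deg(u_p, C₁) = deg(u_p, C_ρ) = p, and the Dirichlet energy equals E(u_p) = 2πp(1 − ρ^p)/(1 + ρ^p). -/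
open Complex MeasureTheory

noncomputable section Aux

/-- The ℝ-linear map `v ↦ a v + b v̄`. -/
def Lmap (a b : ℂ) : ℂ →L[ℝ] ℂ :=
  a • (ContinuousLinearMap.id ℝ ℂ) + b • (Complex.conjCLE : ℂ ≃L[ℝ] ℂ).toContinuousLinearMap

@[simp] lemma Lmap_apply (a b v : ℂ) : Lmap a b v = a * v + b * (starRingEnd ℂ) v := by
  simp [Lmap]

/-- The basic shape `a z^m + b z̄^k`. -/
def shp (a b : ℂ) (m : ℕ) (k : ℤ) : ℂ → ℂ :=
  fun w => a * w ^ m + b * ((starRingEnd ℂ) w) ^ k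

lemma hasF (a b : ℂ) (m : ℕ) (k : ℤ) (z : ℂ) (hz : z ≠ 0) :
    HasFDerivAt (shp a b m k)
      (Lmap (a * m * z ^ (m - 1)) (b * k * ((starRingEnd ℂ) z) ^ (k - 1))) z := by
  have hcz : (starRingEnd ℂ) z ≠ 0 := by simpa using hz
  have h1 : HasFDerivAt (fun w : ℂ => w ^ m) _ z :=
    (hasDerivAt_pow m z).hasFDerivAt.restrictScalars ℝ
  have hconj : HasFDerivAt (fun w : ℂ => (starRingEnd ℂ) w)
      Complex.conjCLE.toContinuousLinearMap z := Complex.conjCLE.hasFDerivAt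
  have h2' : HasFDerivAt (fun w : ℂ => w ^ k) _ ((starRingEnd ℂ) z) :=
    (hasDerivAt_zpow k _ (Or.inl hcz)).hasFDerivAt.restrictScalars ℝ
  have h2 := h2'.comp z hconj
  have h := (h1.const_mul a).add (h2.const_mul b)
  refine h.congr_fderiv ?_
  apply ContinuousLinearMap.ext
  intro v
  simp [Function.comp, Complex.conjCLE_apply]
  ring

lemma pdx_shp (a b : ℂ) (m : ℕ) (k : ℤ) {z : ℂ} (hz : z ≠ 0) :
    pdx (shp a b m k) z = a * m * z ^ (m - 1) + b * k * ((starRingEnd ℂ) z) ^ (k - 1) := by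
  rw [pdx, (hasF a b m k z hz).fderiv]; simp

lemma pdy_shp (a b : ℂ) (m : ℕ) (k : ℤ) {z : ℂ} (hz : z ≠ 0) :
    pdy (shp a b m k) z
      = a * m * z ^ (m - 1) * Complex.I - b * k * ((starRingEnd ℂ) z) ^ (k - 1) * Complex.I := by
  rw [pdy, (hasF a b m k z hz).fderiv]; simp; ring

lemma pdx_shp_ev (a b : ℂ) (m : ℕ) (k : ℤ) {z : ℂ} (hz : z ≠ 0) :
    pdx (shp a b m k) =ᶠ[nhds z] shp (a * m) (b * k) (m - 1) (k - 1) := by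
  filter_upwards [IsOpen.mem_nhds isOpen_compl_singleton hz] with w hw
  rw [pdx_shp a b m k hw]; rfl

lemma pdy_shp_ev (a b : ℂ) (m : ℕ) (k : ℤ) {z : ℂ} (hz : z ≠ 0) :
    pdy (shp a b m k) =ᶠ[nhds z]
      shp (a * m * Complex.I) (-(b * k * Complex.I)) (m - 1) (k - 1) := by
  filter_upwards [IsOpen.mem_nhds isOpen_compl_singleton hz] with w hw
  rw [pdy_shp a b m k hw]; simp [shp]; ring

lemma lap_shp (a b : ℂ) (m : ℕ) (k : ℤ) {z : ℂ} (hz : z ≠ 0) :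
    pdx (pdx (shp a b m k)) z + pdy (pdy (shp a b m k)) z = 0 := by
  have h1 : pdx (pdx (shp a b m k)) z
      = pdx (shp (a * m) (b * k) (m - 1) (k - 1)) z := by
    show fderiv ℝ (pdx (shp a b m k)) z 1 = _
    rw [(pdx_shp_ev a b m k hz).fderiv_eq]; rfl
  have h2 : pdy (pdy (shp a b m k)) z
      = pdy (shp (a * m * Complex.I) (-(b * k * Complex.I)) (m - 1) (k - 1)) z := by
    show fderiv ℝ (pdy (shp a b m k)) z Complex.I = _
    rw [(pdy_shp_ev a b m k hz).fderiv_eq]; rfl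
  rw [h1, h2, pdx_shp _ _ _ _ hz, pdy_shp _ _ _ _ hz]
  linear_combination (a * m * (m-1 : ℕ) * z ^ (m - 1 - 1)
    + b * k * ((k - 1 : ℤ) : ℂ) * ((starRingEnd ℂ) z) ^ (k - 1 - 1)) * Complex.I_mul_I

lemma wedge_real_real (s t : ℝ) (w : ℂ) :
    wedge ((s : ℂ) * w) ((t : ℂ) * w) = 0 := by
  simp [wedge, Complex.mul_re, Complex.mul_im]; ring

lemma wedge_I_mul (s : ℝ) (w : ℂ) :
    wedge w ((s : ℂ) * Complex.I * w) = s * Complex.normSq w := by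
  simp [wedge, Complex.normSq_apply, Complex.mul_re, Complex.mul_im]; ring

lemma par_ident (A B : ℂ) :
    ‖A + B‖ ^ 2 + ‖A * Complex.I - B * Complex.I‖ ^ 2
      = 2 * ‖A‖ ^ 2 + 2 * ‖B‖ ^ 2 := by
  rw [← Complex.normSq_eq_norm_sq, ← Complex.normSq_eq_norm_sq, ← Complex.normSq_eq_norm_sq,
    ← Complex.normSq_eq_norm_sq]
  simp [Complex.normSq_apply, Complex.mul_re, Complex.mul_im]
  ring

end Aux

set_option maxHeartbeats 2000000 in
/-- The radial map `u_p(z) = α(z^p + ρ^p z̄^{−p})/(1 + ρ^p)` is a solution of the semi-stiff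
problem, has degree `p` on both boundary circles, and `E(u_p) = 2πp(1 − ρ^p)/(1 + ρ^p)`. -/
theorem stmt9 (ρ : ℝ) (hρ0 : 0 < ρ) (hρ1 : ρ < 1)
    (p : ℕ) (hp : 1 ≤ p) (α : ℂ) (hα : ‖α‖ = 1)
    (u : ℂ → ℂ)
    (hu : u = fun z =>
      α * (z ^ p + (ρ : ℂ) ^ p * ((starRingEnd ℂ) z) ^ (-(p : ℤ))) / (1 + (ρ : ℂ) ^ p)) :
    (∀ z ∈ ann ρ, pdx (pdx u) z + pdy (pdy u) z = 0) ∧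
    (∀ z ∈ bdry ρ, ‖u z‖ = 1) ∧
    (∀ z ∈ bdry ρ, wedge (u z) (rderiv u z) = 0) ∧
    degCirc u 1 = (p : ℝ) ∧ degCirc u ρ = (p : ℝ) ∧
    energy ρ u = 2 * Real.pi * (p : ℝ) * (1 - ρ ^ p) / (1 + ρ ^ p) := by
  have hdR : (0:ℝ) < 1 + ρ ^ p := by positivity
  have hd : (1 : ℂ) + (ρ:ℂ) ^ p ≠ 0 := by
    have : ((1 + ρ ^ p : ℝ) : ℂ) ≠ 0 := Complex.ofReal_ne_zero.mpr hdR.ne'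
    push_cast at this; exact this
  set a : ℂ := α / (1 + (ρ:ℂ) ^ p) with ha
  set b : ℂ := a * (ρ:ℂ) ^ p with hb
  have hu' : u = shp a b p (-(p:ℤ)) := by
    rw [hu]; funext z; simp only [shp, ha, hb]
    generalize ((starRingEnd ℂ) z) ^ (-(p:ℤ)) = X
    field_simp
  obtain ⟨q, rfl⟩ : ∃ q, p = q + 1 := ⟨p - 1, (Nat.succ_pred_eq_of_pos hp).symm⟩
  set p : ℕ := q + 1 with hpq
  have hρ : (ρ:ℂ) ≠ 0 := Complex.ofReal_ne_zero.mpr hρ0.ne'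
  -- key computation of conj z ^ (-p) on circles
  have key2 : ∀ (r : ℝ) (z : ℂ), 0 < r → ‖z‖ = r →
      ((starRingEnd ℂ) z) ^ (-(p:ℤ)) = z ^ p / (r:ℂ) ^ (2*p) := by
    intro r z hr habs
    have hz0 : z ≠ 0 := by
      intro h; rw [h] at habs; simp at habs; exact hr.ne habs
    have hcz : (starRingEnd ℂ) z ≠ 0 := by simpa using hz0
    have hcj : (starRingEnd ℂ) z * z = ((r:ℂ))^2 := by
      rw [mul_comm, Complex.mul_conj, Complex.normSq_eq_norm_sq, habs]; push_cast; ring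
    have hmul : ((starRingEnd ℂ) z) ^ p * z ^ p = (r:ℂ) ^ (2*p) := by
      rw [← mul_pow, hcj, ← pow_mul, two_mul, ← two_mul]
    have hr0 : ((r:ℂ)) ^ (2*p) ≠ 0 := by
      simpa using pow_ne_zero (2*p) (Complex.ofReal_ne_zero.mpr hr.ne')
    rw [zpow_neg, zpow_natCast, eq_div_iff hr0, inv_mul_eq_iff_eq_mul₀ (pow_ne_zero _ hcz)]
    rw [← hmul]
  have deg_calc : ∀ r : ℝ, 0 < r →
      (a * ((r:ℂ)^p + (ρ:ℂ)^p * (r:ℂ)^(-(p:ℤ))) = α) → degCirc u r = p := by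
    intro r hr hsum
    have hval : ∀ t : ℝ, u ((r:ℂ) * Complex.exp (Complex.I * t))
        = α * Complex.exp (((p:ℂ) * Complex.I) * t) := by
      intro t
      have hc : (starRingEnd ℂ) ((r:ℂ) * Complex.exp (Complex.I * t))
          = (r:ℂ) * Complex.exp (-(Complex.I * t)) := by
        rw [map_mul, Complex.conj_ofReal, ← Complex.exp_conj]
        congr 1
        simp [map_mul, Complex.conj_ofReal, Complex.conj_I]
      rw [hu']; simp only [shp]
      rw [hc, mul_zpow, mul_pow]
      have e1 : Complex.exp (Complex.I * t) ^ p = Complex.exp (((p:ℂ) * Complex.I) * t) := by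
        rw [← Complex.exp_nat_mul]; ring_nf
      have e2 : Complex.exp (-(Complex.I * t)) ^ (-(p:ℤ))
          = Complex.exp (((p:ℂ) * Complex.I) * t) := by
        rw [← Complex.exp_int_mul]; push_cast; ring_nf
      rw [e1, e2]
      linear_combination Complex.exp (((p:ℂ) * Complex.I) * t) * hsum
    have hder : ∀ θ : ℝ, deriv (fun t : ℝ => α * Complex.exp (((p:ℂ) * Complex.I) * t)) θ
        = ((p:ℝ):ℂ) * Complex.I * (α * Complex.exp (((p:ℂ) * Complex.I) * θ)) := by
      intro θ
      have h0 : HasDerivAt (fun t : ℝ => ((t:ℝ):ℂ)) 1 θ := by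
        simpa using (hasDerivAt_id θ).ofReal_comp
      have h1 := ((h0.const_mul ((p:ℂ) * Complex.I)).cexp).const_mul α
      rw [h1.deriv]
      push_cast; ring
    have hns : ∀ θ : ℝ, Complex.normSq (α * Complex.exp (((p:ℂ) * Complex.I) * θ)) = 1 := by
      intro θ
      rw [Complex.normSq_mul, Complex.normSq_eq_norm_sq, Complex.normSq_eq_norm_sq, hα,
        Complex.norm_exp]
      simp [Complex.mul_re]
    rw [degCirc]
    simp only [hval]
    rw [intervalIntegral.integral_congr (g := fun _ : ℝ => (p:ℝ))
      (fun θ _ => by rw [hder θ, wedge_I_mul, hns θ, mul_one]),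
      intervalIntegral.integral_const]
    simp
    field_simp
  refine ⟨?_, ?_, ?_, ?_, ?_, ?_⟩
  · -- Laplacian
    intro z hz
    have hz0 : z ≠ 0 := by
      rintro rfl; simp [ann] at hz; linarith
    rw [hu']; exact lap_shp a b p (-(p:ℤ)) hz0
  · -- boundary modulus
    rintro z (h1 | h2)
    · have hval : u z = α * z ^ p := by
        rw [hu']; simp only [shp]
        rw [key2 1 z one_pos h1, hb, ha]
        push_cast; field_simp; ring
      rw [hval]
      simp [map_mul, map_pow, hα, h1]
    · have hval : u z = α * z ^ p / (ρ:ℂ) ^ p := by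
        rw [hu']; simp only [shp]
        rw [key2 ρ z hρ0 h2, hb, ha]
        field_simp; ring
      rw [hval]
      rw [norm_div, norm_mul, norm_pow, norm_pow, hα, h2, Complex.norm_real,
        Real.norm_of_nonneg hρ0.le, one_mul, div_self (by positivity)]
  · -- wedge condition
    rintro z hz
    obtain ⟨r, hr, habs⟩ : ∃ r : ℝ, 0 < r ∧ ‖z‖ = r := by
      rcases hz with h | h
      exacts [⟨1, one_pos, h⟩, ⟨ρ, hρ0, h⟩]
    have hz0 : z ≠ 0 := by
      intro h; rw [h] at habs; simp at habs; exact hr.ne habs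
    have hcz : (starRingEnd ℂ) z ≠ 0 := by simpa using hz0
    have hrC : ((r:ℝ):ℂ) ≠ 0 := Complex.ofReal_ne_zero.mpr hr.ne'
    have hu1 : u z = ((1 + ρ^p/r^(2*p) : ℝ) : ℂ) * (a * z ^ p) := by
      rw [hu']; simp only [shp]
      rw [key2 r z hr habs, hb]
      push_cast
      field_simp
    have hu2 : rderiv u z = (((p:ℝ)/r * (1 - ρ^p/r^(2*p)) : ℝ) : ℂ) * (a * z ^ p) := by
      rw [rderiv, habs, hu', (hasF a b p (-(p:ℤ)) z hz0).fderiv, Lmap_apply,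
        map_div₀, Complex.conj_ofReal]
      rw [zpow_sub_one₀ hcz, key2 r z hr habs, hb]
      simp only [hpq, Nat.add_sub_cancel]
      push_cast
      field_simp [hcz, hrC, hd]
      ring
    rw [hu1, hu2]
    exact wedge_real_real _ _ _
  · -- degree on C_1
    apply deg_calc 1 one_pos
    rw [ha]
    field_simp
    simp
  · -- degree on C_ρ
    apply deg_calc ρ hρ0
    rw [ha]
    have hcan : (ρ:ℂ)^p * (ρ:ℂ)^(-(p:ℤ)) = 1 := by
      rw [← zpow_natCast, ← zpow_add₀ hρ]; simp
    rw [hcan, div_mul_eq_mul_div, div_eq_iff hd]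
    ring
  · -- energy
    have hmeas : MeasurableSet (ann ρ) :=
      ((isOpen_Ioo.preimage continuous_norm) : IsOpen ((fun z : ℂ => ‖z‖) ⁻¹' Set.Ioo ρ 1)).measurableSet
    set C : ℝ := 2*(p:ℝ)^2/(1+ρ^p)^2 with hC
    set G : ℝ → ℝ := fun r => C * (r^(2*q) + ρ^(2*p) / r^(2*p+2)) with hGdef
    have hset : ann ρ = (fun z : ℂ => ‖z‖) ⁻¹' (Set.Ioo ρ 1) := by
      ext z; simp [ann, and_comm]
    have hpt : ∀ z ∈ ann ρ, ‖pdx u z‖^2 + ‖pdy u z‖^2 = G ‖z‖ := by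
      intro z hz
      have hz0 : z ≠ 0 := by
        rintro rfl; simp [ann] at hz; linarith
      have hs0 : (0:ℝ) < ‖z‖ := by
        simpa [norm_pos_iff] using hz0
      rw [hu', pdx_shp a b p (-(p:ℤ)) hz0, pdy_shp a b p (-(p:ℤ)) hz0, par_ident]
      have habsA : ‖a * (p:ℂ) * z ^ (p-1)‖ = (p:ℝ)/(1+ρ^p) * ‖z‖ ^ q := by
        rw [norm_mul, norm_mul, norm_pow, ha, norm_div, hα]
        have : ‖1 + (ρ:ℂ)^p‖ = 1 + ρ^p := by
          rw [show (1 + (ρ:ℂ)^p) = ((1 + ρ^p : ℝ) : ℂ) by push_cast; ring,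
            Complex.norm_real, Real.norm_of_nonneg hdR.le]
        rw [this, Complex.norm_natCast, show p - 1 = q from rfl]
        ring
      have habsB : ‖b * -((p:ℕ):ℂ) * ((starRingEnd ℂ) z) ^ ((-(p:ℤ))-1)‖
          = ρ^p * (p:ℝ)/(1+ρ^p) * (‖z‖ ^ (p+1))⁻¹ := by
        rw [norm_mul, norm_mul, norm_zpow, Complex.norm_conj, hb, norm_mul, ha, norm_div, hα]
        have h1 : ‖1 + (ρ:ℂ)^p‖ = 1 + ρ^p := by
          rw [show (1 + (ρ:ℂ)^p) = ((1 + ρ^p : ℝ) : ℂ) by push_cast; ring,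
            Complex.norm_real, Real.norm_of_nonneg hdR.le]
        have h2 : ‖-((p:ℕ):ℂ)‖ = (p:ℝ) := by
          simp
        have h3 : ‖z‖ ^ ((-(p:ℤ))-1) = (‖z‖ ^ (p+1))⁻¹ := by
          rw [show ((-(p:ℤ))-1) = -((p+1 : ℕ) : ℤ) by push_cast; ring, zpow_neg, zpow_natCast]
        rw [h1, h2, h3, norm_pow, Complex.norm_real, Real.norm_of_nonneg hρ0.le]
        ring
      simp only [Int.cast_neg, Int.cast_natCast]
      rw [habsA, habsB]
      simp only [hGdef, hC]
      have hppow : ‖z‖ ^ (2*p+2) = (‖z‖ ^ (p+1))^2 := by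
        rw [← pow_mul]; ring_nf
      have hq2 : ‖z‖ ^ (2*q) = (‖z‖ ^ q)^2 := by
        rw [← pow_mul]; ring_nf
      rw [hppow, hq2]
      have hne : (‖z‖ ^ (p+1)) ≠ 0 := by positivity
      field_simp
      ring
    have hchain : (∫ z in ann ρ, (‖pdx u z‖ ^ 2 + ‖pdy u z‖ ^ 2))
        = 2 * Real.pi * ∫ y in (ρ:ℝ)..1, y * G y := by
      rw [setIntegral_congr_fun hmeas hpt]
      rw [← integral_indicator hmeas]
      have hind : ∀ z : ℂ, (ann ρ).indicator (fun z => G ‖z‖) z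
          = (Set.Ioo ρ 1).indicator G ‖z‖ := by
        intro z
        rw [hset]
        exact Set.indicator_comp_right (s := Set.Ioo ρ 1) (g := G) (fun z : ℂ => ‖z‖)
      rw [show (fun z : ℂ => (ann ρ).indicator (fun z => G ‖z‖) z)
          = (fun z : ℂ => (Set.Ioo ρ 1).indicator G ‖z‖) from funext hind]
      rw [MeasureTheory.integral_fun_norm_addHaar volume ((Set.Ioo ρ 1).indicator G)]
      have hvol : volume.real (Metric.ball (0:ℂ) 1) = Real.pi := by
        rw [measureReal_def, Complex.volume_ball]
        simp
      rw [Complex.finrank_real_complex, hvol]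
      have hindmul : ∀ y : ℝ, y ^ (2-1) • (Set.Ioo ρ 1).indicator G y
          = (Set.Ioo ρ 1).indicator (fun y => y * G y) y := by
        intro y
        by_cases h : y ∈ Set.Ioo ρ 1 <;>
          simp [h, Set.indicator_of_mem, Set.indicator_of_notMem, smul_eq_mul]
      rw [show (fun y : ℝ => y ^ (2-1) • (Set.Ioo ρ 1).indicator G y)
          = (fun y : ℝ => (Set.Ioo ρ 1).indicator (fun y => y * G y) y) from funext hindmul]
      have hsub : Set.Ioo ρ 1 ⊆ Set.Ioi 0 := fun y hy => lt_trans hρ0 hy.1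
      rw [setIntegral_indicator measurableSet_Ioo,
        Set.inter_eq_self_of_subset_right hsub,
        intervalIntegral.integral_of_le hρ1.le, integral_Ioc_eq_integral_Ioo]
      simp [smul_eq_mul]
      ring
    have h0not : (0:ℝ) ∉ Set.uIcc ρ 1 := by
      rw [Set.uIcc_of_le hρ1.le]
      exact fun h => absurd h.1 (by linarith)
    have hEq : Set.EqOn (fun y : ℝ => y * G y)
        (fun y => C * y^(((2*q+1 : ℕ)) : ℤ) + (C * ρ^(2*p)) * y^(-(2*(p:ℤ))-1))
        (Set.uIcc ρ 1) := by
      intro y hy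
      have hy0 : 0 < y := by
        rw [Set.uIcc_of_le hρ1.le] at hy; linarith [hy.1]
      simp only [hGdef]
      have e1 : y^(((2*q+1 : ℕ)) : ℤ) = y^(2*q+1 : ℕ) := zpow_natCast y _
      have e2 : y^(-(2*(p:ℤ))-1) = (y^(2*p+1 : ℕ))⁻¹ := by
        rw [show -(2*(p:ℤ))-1 = -((2*p+1 : ℕ) : ℤ) by push_cast; ring, zpow_neg, zpow_natCast]
      rw [e1, e2]
      field_simp
      ring
    have hne1 : -(2*(p:ℤ))-1 ≠ -1 := by
      have : (1:ℤ) ≤ (p:ℤ) := by exact_mod_cast hp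
      omega
    have hint : (∫ y in (ρ:ℝ)..1, y * G y)
        = C * ((1 - ρ^(2*p))/(2*p)) + (C * ρ^(2*p)) * ((1 - (ρ^(2*p))⁻¹)/(-(2*(p:ℝ)))) := by
      rw [intervalIntegral.integral_congr hEq]
      rw [intervalIntegral.integral_add
        ((intervalIntegral.intervalIntegrable_zpow (Or.inl (by positivity))).const_mul C)
        ((intervalIntegral.intervalIntegrable_zpow (Or.inr h0not)).const_mul (C * ρ^(2*p)))]
      rw [intervalIntegral.integral_const_mul, intervalIntegral.integral_const_mul,
        integral_zpow (Or.inl (by positivity)), integral_zpow (Or.inr ⟨hne1, h0not⟩)]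
      have c1 : (ρ:ℝ)^((((2*q+1 : ℕ)) : ℤ)+1) = ρ^(2*p) := by
        rw [show (((2*q+1 : ℕ)) : ℤ)+1 = ((2*p : ℕ) : ℤ) by simp [hpq]; push_cast; ring,
          zpow_natCast]
      have c2 : (ρ:ℝ)^((-(2*(p:ℤ))-1)+1) = (ρ^(2*p))⁻¹ := by
        rw [show (-(2*(p:ℤ))-1)+1 = -((2*p : ℕ) : ℤ) by push_cast; ring, zpow_neg, zpow_natCast]
      rw [c1, c2, one_zpow, one_zpow]
      push_cast
      congr 1
      · congr 1
        simp [hpq]; push_cast; ring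
      · congr 1
        push_cast; ring
    have hfact : ρ^(2*p) = (ρ^p)^2 := by rw [two_mul, pow_add]; ring
    have hnz : (ρ:ℝ)^(2*p) ≠ 0 := by positivity
    have hpR : (0:ℝ) < (p:ℝ) := by exact_mod_cast hp
    rw [show energy ρ u = (1 / 2) * ∫ z in ann ρ,
        (‖pdx u z‖ ^ 2 + ‖pdy u z‖ ^ 2) from rfl]
    rw [hchain, hint, hC, hfact]
    have hx : (ρ:ℝ)^p ≠ 0 := by positivity
    field_simp
    ring
end
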